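/- arXiv:2110.10120 — 9 statements merged into one kernel-verified Lean document; each statement's English description precedes it below -/
import Mathlib

section
/- Let A be a commutative ring and ϖ ∈ A. (i) If A → A' is a ϖ-complete arc cover, then the induced ring map A/ϖA → A'/ϖA' is an arc cover. (ii) Conversely, every arc cover A → A' is a ϖ-complete arc cover. -/
/-- A ring map `f : A →+* A'` is an arc cover if for every valuation ring `V` of Krull
dimension `≤ 1` and every ring map `A → V`, there are a faithfully flat map of valuation
rings `V → V'` and a map `A' → V'` making the square commute. -/
def IsArcCover {A A' : Type} [CommRing A] [CommRing A'] (f : A →+* A') : Prop :=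
  ∀ (V : Type) [CommRing V] [IsDomain V] [ValuationRing V],
    ringKrullDim V ≤ 1 →
    ∀ g : A →+* V,
      ∃ (V' : Type) (iR : CommRing V'),
        letI := iR
        ∃ (iD : IsDomain V'),
          letI := iD
          ∃ (_ : ValuationRing V') (h : V →+* V'),
            (letI := h.toAlgebra; Module.FaithfullyFlat V V') ∧
            ∃ k : A' →+* V', k.comp f = h.comp g

/-- A ring map `f : A →+* A'` is a `ϖ`-complete arc cover if the arc-cover lifting
condition holds for all rank `≤ 1` valuation rings that are complete for the adic
topology of the ideal generated by the image of `ϖ`. -/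
def IsCompleteArcCover {A A' : Type} [CommRing A] [CommRing A'] (ϖ : A) (f : A →+* A') : Prop :=
  ∀ (V : Type) [CommRing V] [IsDomain V] [ValuationRing V],
    ringKrullDim V ≤ 1 →
    ∀ g : A →+* V, IsAdicComplete (Ideal.span {g ϖ}) V →
      ∃ (V' : Type) (iR : CommRing V'),
        letI := iR
        ∃ (iD : IsDomain V'),
          letI := iD
          ∃ (_ : ValuationRing V') (h : V →+* V'),
            (letI := h.toAlgebra; Module.FaithfullyFlat V V') ∧
            ∃ k : A' →+* V', k.comp f = h.comp g

theorem complete_arc_cover_mod_and_arc_cover_is_complete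
    (A : Type) [CommRing A] (ϖ : A) (A' : Type) [CommRing A'] (f : A →+* A') :
    (IsCompleteArcCover ϖ f →
      IsArcCover (Ideal.quotientMap (I := Ideal.span {ϖ}) (Ideal.span {f ϖ}) f
        (by rw [Ideal.span_le, Set.singleton_subset_iff]
            exact Ideal.mem_comap.mpr (Ideal.subset_span rfl)))) ∧
    (IsArcCover f → IsCompleteArcCover ϖ f) := by
  constructor
  · intro hc
    intro V _ _ _ hdim g
    have hg' : (g.comp (Ideal.Quotient.mk (Ideal.span {ϖ}))) ϖ = 0 := by
      simp only [RingHom.comp_apply]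
      have hz : (Ideal.Quotient.mk (Ideal.span {ϖ})) ϖ = 0 :=
        Ideal.Quotient.eq_zero_iff_mem.mpr (Ideal.subset_span rfl)
      rw [hz, map_zero]
    have hcomp : IsAdicComplete (Ideal.span {(g.comp (Ideal.Quotient.mk (Ideal.span {ϖ}))) ϖ}) V := by
      rw [hg', Ideal.span_singleton_eq_bot.mpr rfl]
      infer_instance
    obtain ⟨V', iR, iD, iV, h, hff, k, hk⟩ :=
      hc V hdim (g.comp (Ideal.Quotient.mk (Ideal.span {ϖ}))) hcomp
    refine ⟨V', iR, iD, iV, h, hff, ?_⟩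
    have hker : ∀ x ∈ Ideal.span {f ϖ}, k x = 0 := by
      intro x hx
      rw [Ideal.mem_span_singleton] at hx
      obtain ⟨c, rfl⟩ := hx
      have : k (f ϖ) = 0 := by
        have := congrArg (fun φ => φ ϖ) hk
        simpa [hg'] using this
      rw [map_mul, this, zero_mul]
    refine ⟨Ideal.Quotient.lift _ k hker, ?_⟩
    apply RingHom.ext
    intro x
    obtain ⟨a, rfl⟩ := Ideal.Quotient.mk_surjective x
    have := congrArg (fun φ => φ a) hk
    simpa [Ideal.quotientMap_mk] using this
  · intro ha
    intro V _ _ _ hdim g _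
    exact ha V hdim g
end

section
/- Let p be a prime, let (A, ϖ) be a perfectoid ring with tilt A♭, and let ϖ♭ ∈ A♭ be a tilt of ϖ. Then the ring homomorphism f : A♭ → A/ϖA given by taking the zeroth component A♭ → A/pA (Perfection.coeff 0) followed by the reduction A/pA → A/ϖA (note ϖ divides p) is surjective, and its kernel is the principal ideal of A♭ generated by ϖ♭. In particular f induces a ring isomorphism A♭/(ϖ♭) ≅ A/ϖA. -/
/-- `(A, ϖ)` is a perfectoid ring. -/
structure IsPerfectoid (p : ℕ) (A : Type) [CommRing A] (ϖ : A) : Prop where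
  pow_dvd : ϖ ^ p ∣ (p : A)
  complete : IsAdicComplete (Ideal.span {ϖ}) A
  char : CharP (A ⧸ Ideal.span {(p : A)}) p
  frobenius_surjective : ∀ x : A, ∃ y : A, x - y ^ p ∈ Ideal.span {ϖ ^ p}
  frobenius_injective : ∀ x y : A, x ^ p - y ^ p ∈ Ideal.span {ϖ ^ p} → x - y ∈ Ideal.span {ϖ}

/-- `ϖ♭` is a tilt of `ϖ`. -/
def IsTilt (p : ℕ) [Fact p.Prime] (A : Type) [CommRing A]
    [CharP (A ⧸ Ideal.span {(p : A)}) p] (ϖ : A)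
    (ϖb : Perfection (A ⧸ Ideal.span {(p : A)}) p) : Prop :=
  ∃ u : Aˣ, Perfection.coeff (A ⧸ Ideal.span {(p : A)}) p 0 ϖb =
    Ideal.Quotient.mk (Ideal.span {(p : A)}) ((u : A) * ϖ)

variable {A : Type} [CommRing A] {p : ℕ} {ϖ : A}

private lemma pow_sub_pow_dvd (hp : p.Prime) {z c d : A}
    (hz : z ∣ c - d) : ∃ α, c ^ p - d ^ p = (c - d) ^ p + p * (z * α) := by
  obtain ⟨s, hs⟩ : z ∣ d * (c - d) *
      ∑ k ∈ Finset.Ioo 0 p, d ^ (k - 1) * (c - d) ^ (p - k - 1) * ((p.choose k / p : ℕ) : A) :=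
    (hz.mul_left d).mul_right _
  refine ⟨s, ?_⟩
  have h := add_pow_prime_eq hp d (c - d)
  have hc : d + (c - d) = c := by ring
  rw [hc] at h
  linear_combination h + (p : A) * hs

/-- L2 -/
private lemma dvd_pow_sub_pow (hp : p.Prime) (hp2 : ϖ ^ p ∣ (p : A)) {c d : A} {m : ℕ}
    (hm : 1 ≤ m) (h : ϖ ^ m ∣ c - d) : ϖ ^ (m + 1) ∣ c ^ p - d ^ p := by
  obtain ⟨α, hα⟩ := pow_sub_pow_dvd hp h
  rw [hα]
  have h2 : 2 ≤ p := hp.two_le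
  refine dvd_add ?_ ?_
  · have : ϖ ^ (m + 1) ∣ (ϖ ^ m) ^ p := by
      rw [← pow_mul]; exact pow_dvd_pow _ (by nlinarith)
    exact this.trans (pow_dvd_pow_of_dvd h p)
  · obtain ⟨e, he⟩ := hp2
    have : ϖ ^ (m + 1) ∣ (p : A) * ϖ ^ m := by
      rw [he]
      have : ϖ ^ (m + 1) ∣ ϖ ^ (p + m) := pow_dvd_pow _ (by omega)
      exact this.trans ⟨e, by ring⟩
    exact (this.mul_right α).trans (dvd_of_eq (by ring))

/-- L1 -/
private lemma dvd_pow_sub_pow' (hp : p.Prime) (hp2 : ϖ ^ p ∣ (p : A)) {c d : A} {k : ℕ}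
    (h : (p : A) * ϖ ^ k ∣ c - d) : (p : A) * ϖ ^ (k + 1) ∣ c ^ p - d ^ p := by
  obtain ⟨α, hα⟩ := pow_sub_pow_dvd hp h
  rw [hα]
  have h2 : 2 ≤ p := hp.two_le
  obtain ⟨e, he⟩ := hp2
  refine dvd_add ?_ ?_
  · -- (c-d)^p divisible by (p ϖ^k)^p = p^p ϖ^{kp} ; and p*ϖ^(k+1) ∣ p^p ϖ^{kp}
    have h3 : (p : A) * ϖ ^ (k + 1) ∣ ((p : A) * ϖ ^ k) ^ p := by
      have hpow : ((p : A) * ϖ ^ k) ^ p = (p : A) * ((p:A) ^ (p-1) * ϖ ^ (k*p)) := by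
        rw [mul_pow, ← pow_mul]
        have : (p:A) ^ p = (p:A) * (p:A)^(p-1) := by
          rw [← pow_succ']; congr 1; omega
        rw [this]; ring
      rw [hpow]
      refine mul_dvd_mul_left _ ?_
      have h4 : ϖ ^ (k+1) ∣ ϖ ^ (p*(p-1) + k*p) := pow_dvd_pow _ (by
        have h1 : 1 ≤ p - 1 := by omega
        nlinarith)
      refine h4.trans ?_
      have : ϖ ^ (p*(p-1) + k*p) = (ϖ^p)^(p-1) * ϖ^(k*p) := by rw [← pow_mul, ← pow_add]
      rw [this, he]
      exact mul_dvd_mul (pow_dvd_pow_of_dvd ⟨e, rfl⟩ _) dvd_rfl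
    exact h3.trans (pow_dvd_pow_of_dvd h p)
  · -- p * (p ϖ^k α)
    have h5 : (p:A) * ϖ ^ (k+1) ∣ (p:A) * (ϖ^k * (p:A)) := by
      refine mul_dvd_mul_left _ ?_
      have : ϖ ^ (k+1) ∣ ϖ^k * ϖ^p := by rw [← pow_add]; exact pow_dvd_pow _ (by omega)
      exact this.trans (mul_dvd_mul_left _ ⟨e, he⟩)
    exact (h5.mul_right α).trans (dvd_of_eq (by ring))

private lemma dvd_pow_sub_pow_iter (hp : p.Prime) (hp2 : ϖ ^ p ∣ (p : A)) {c d : A} {m : ℕ}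
    (hm : 1 ≤ m) (h : ϖ ^ m ∣ c - d) : ∀ k, ϖ ^ (m + k) ∣ c ^ p ^ k - d ^ p ^ k := by
  intro k
  induction k with
  | zero => simpa using h
  | succ k ih =>
      have := dvd_pow_sub_pow hp hp2 (by omega : 1 ≤ m + k) ih
      rw [← pow_mul, ← pow_mul, ← pow_succ] at this
      exact (dvd_of_eq (by ring)).trans this

private lemma dvd_pow_sub_pow_iter' (hp : p.Prime) (hp2 : ϖ ^ p ∣ (p : A)) {c d : A}
    (h : (p : A) ∣ c - d) : ∀ k, (p : A) * ϖ ^ k ∣ c ^ p ^ k - d ^ p ^ k := by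
  intro k
  induction k with
  | zero => simpa using h
  | succ k ih =>
      have := dvd_pow_sub_pow' hp hp2 ih
      rw [← pow_mul, ← pow_mul, ← pow_succ] at this
      exact this

/-- limits -/
private lemma exists_limit (hcomp : IsAdicComplete (Ideal.span {ϖ}) A) (s : ℕ → A)
    (h : ∀ k, ϖ ^ k ∣ s (k + 1) - s k) : ∃ L, ∀ k, ϖ ^ k ∣ L - s k := by
  have htel : ∀ m n, m ≤ n → ϖ ^ m ∣ s n - s m := by
    intro m n hmn
    induction n, hmn using Nat.le_induction with
    | base => simp
    | succ n hmn ih =>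
        have h1 : ϖ ^ m ∣ s (n+1) - s n := (pow_dvd_pow _ hmn).trans (h n)
        have := dvd_add h1 ih
        simpa using this
  have hcauchy : ∀ {m n}, m ≤ n → s m ≡ s n [SMOD (Ideal.span {ϖ} ^ m • ⊤ : Submodule A A)] := by
    intro m n hmn
    simp only [Ideal.smul_eq_mul, Ideal.mul_top, SModEq.sub_mem, Ideal.span_singleton_pow,
      Ideal.mem_span_singleton]
    rw [show s m - s n = -(s n - s m) by ring]
    exact (htel m n hmn).neg_right
  obtain ⟨L, hL⟩ := IsPrecomplete.prec hcomp.toIsPrecomplete @hcauchy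
  refine ⟨L, fun k => ?_⟩
  have := hL k
  simp only [Ideal.smul_eq_mul, Ideal.mul_top, SModEq.sub_mem, Ideal.span_singleton_pow,
    Ideal.mem_span_singleton] at this
  rw [show L - s k = -(s k - L) by ring]
  exact this.neg_right

private lemma eq_zero_of_forall_pow_dvd (hcomp : IsAdicComplete (Ideal.span {ϖ}) A) (z : A)
    (h : ∀ k, ϖ ^ k ∣ z) : z = 0 := by
  refine IsHausdorff.haus hcomp.toIsHausdorff z fun k => ?_
  simp only [Ideal.smul_eq_mul, Ideal.mul_top, SModEq.sub_mem, Ideal.span_singleton_pow,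
    Ideal.mem_span_singleton, sub_zero]
  exact h k

private lemma isUnit_one_add (hcomp : IsAdicComplete (Ideal.span {ϖ}) A) {r : A}
    (h : ϖ ∣ r) : IsUnit (1 + r) := by
  have h1 : r ∈ (⊥ : Ideal A).jacobson :=
    IsAdicComplete.le_jacobson_bot _ (Ideal.mem_span_singleton.mpr h)
  have := (Ideal.mem_jacobson_bot.mp h1) 1
  simpa [add_comm] using this

private lemma sharp_exists {p : ℕ} [Fact p.Prime] {A : Type} [CommRing A] {ϖ : A}
    [CharP (A ⧸ Ideal.span {(p : A)}) p]
    (hp2 : ϖ ^ p ∣ (p : A)) (hcomp : IsAdicComplete (Ideal.span {ϖ}) A)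
    (x : Perfection (A ⧸ Ideal.span {(p : A)}) p) :
    ∃ a : ℕ → A, (∀ n, a (n + 1) ^ p = a n) ∧
      ∀ n, Ideal.Quotient.mk (Ideal.span {(p : A)}) (a n) =
        Perfection.coeff (A ⧸ Ideal.span {(p : A)}) p n x := by
  have hp : p.Prime := Fact.out
  choose b hb using fun n =>
    Ideal.Quotient.mk_surjective (I := Ideal.span {(p : A)}) (Perfection.coeff _ p n x)
  have hbp : ∀ n, (p : A) ∣ b (n + 1) ^ p - b n := by
    intro n
    rw [← Ideal.mem_span_singleton, ← Ideal.Quotient.mk_eq_mk_iff_sub_mem, map_pow, hb, hb,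
      Perfection.coeff_pow_p']
  set s : ℕ → ℕ → A := fun n k => b (n + k) ^ p ^ k with hs_def
  have hs : ∀ n k, (p : A) * ϖ ^ k ∣ s n (k + 1) - s n k := by
    intro n k
    have h0 := dvd_pow_sub_pow_iter' hp hp2 (hbp (n + k)) k
    have he : (b (n + k + 1) ^ p) ^ p ^ k = s n (k + 1) := by
      show _ = b (n + (k+1)) ^ p ^ (k+1)
      rw [← pow_mul, ← pow_succ']
      rfl
    rwa [he] at h0
  choose r hr using fun n k => hs n k
  set U : ℕ → ℕ → A := fun n m => ∑ k ∈ Finset.range m, ϖ ^ k * r n k with hU_def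
  have hsU : ∀ n m, s n m = b n + (p : A) * U n m := by
    intro n m
    induction m with
    | zero => simp [hs_def, hU_def]
    | succ m ih =>
        have h1 : s n (m + 1) = s n m + (p : A) * ϖ ^ m * r n m := by
          have := hr n m; linear_combination this
        rw [h1, ih, hU_def]
        simp only [Finset.sum_range_succ]
        ring
  have hVlim := fun n => exists_limit hcomp (U n)
    (fun k => ⟨r n k, by simp only [hU_def, Finset.sum_range_succ]; ring⟩)
  choose V hV using hVlim
  refine ⟨fun n => b n + (p : A) * V n, ?_, ?_⟩
  · intro n
    have hclose : ∀ m k, (p : A) * ϖ ^ k ∣ (b m + (p:A) * V m) - s m k := by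
      intro m k
      obtain ⟨c, hc⟩ := hV m k
      exact ⟨c, by rw [hsU m k]; linear_combination (p : A) * hc⟩
    have key : ∀ k, ϖ ^ (k + 1) ∣ (b (n+1) + (p:A) * V (n+1)) ^ p - (b n + (p:A) * V n) := by
      intro k
      have d2 := dvd_pow_sub_pow' hp hp2 (hclose (n+1) k)
      have hsp : (s (n+1) k) ^ p = s n (k+1) := by
        show (b (n+1+k) ^ p ^ k) ^ p = b (n+(k+1)) ^ p ^ (k+1)
        have hidx : n+1+k = n+(k+1) := by omega
        rw [← pow_mul, ← pow_succ, hidx]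
      rw [hsp] at d2
      have d3 := hclose n (k+1)
      obtain ⟨c1, hc1⟩ := d2
      obtain ⟨c2, hc2⟩ := d3
      refine ⟨(p:A) * (c1 - c2), ?_⟩
      linear_combination hc1 - hc2
    have hz : (b (n+1) + (p:A) * V (n+1)) ^ p - (b n + (p:A) * V n) = 0 := by
      refine eq_zero_of_forall_pow_dvd hcomp _ (fun m => ?_)
      match m with
      | 0 => simpa using one_dvd _
      | (k+1) => exact key k
    exact sub_eq_zero.mp hz
  · intro n
    rw [← hb n]
    rw [Ideal.Quotient.mk_eq_mk_iff_sub_mem]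
    exact Ideal.mem_span_singleton.mpr ⟨V n, by ring⟩

private lemma f_surj {p : ℕ} [Fact p.Prime] {A : Type} [CommRing A] {ϖ : A}
    [CharP (A ⧸ Ideal.span {(p : A)}) p]
    (hp2 : ϖ ^ p ∣ (p : A)) (hcomp : IsAdicComplete (Ideal.span {ϖ}) A)
    (hfs : ∀ x : A, ∃ y : A, x - y ^ p ∈ Ideal.span {ϖ ^ p}) (a : A) :
    ∃ x : Perfection (A ⧸ Ideal.span {(p : A)}) p, ∃ e0 : A,
      Perfection.coeff (A ⧸ Ideal.span {(p : A)}) p 0 x =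
        Ideal.Quotient.mk (Ideal.span {(p : A)}) e0 ∧ ϖ ∣ e0 - a := by
  have hp : p.Prime := Fact.out
  have hp1 : 1 ≤ p := hp.one_lt.le
  choose g hg using hfs
  set c : ℕ → A := fun n => g^[n] a with hc_def
  have hstep : ∀ n, ϖ ^ p ∣ c n - c (n + 1) ^ p := by
    intro n
    have h := Ideal.mem_span_singleton.mp (hg (g^[n] a))
    show ϖ ^ p ∣ g^[n] a - (g^[n+1] a) ^ p
    rwa [Function.iterate_succ_apply']
  have hϖdvd : ϖ ∣ (ϖ : A) ^ p := dvd_pow_self _ hp.ne_zero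
  have hstep1 : ∀ n, ϖ ^ 1 ∣ c (n + 1) ^ p - c n := by
    intro n
    rw [pow_one]
    obtain ⟨q, hq⟩ := hϖdvd.trans (hstep n)
    exact ⟨-q, by linear_combination -hq⟩
  set s : ℕ → ℕ → A := fun n k => c (n + k) ^ p ^ k with hs_def
  have hscauchy : ∀ n k, ϖ ^ (1 + k) ∣ s n (k + 1) - s n k := by
    intro n k
    have h0 := dvd_pow_sub_pow_iter hp hp2 le_rfl (hstep1 (n + k)) k
    have he : (c (n + k + 1) ^ p) ^ p ^ k = s n (k + 1) := by
      show _ = c (n + (k + 1)) ^ p ^ (k + 1)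
      rw [← pow_mul, ← pow_succ']
      rfl
    rwa [he] at h0
  have hlim := fun n => exists_limit hcomp (s n)
    (fun k => (pow_dvd_pow _ (by omega : k ≤ 1 + k)).trans (hscauchy n k))
  choose e he using hlim
  have hcompat : ∀ n, e (n + 1) ^ p = e n := by
    intro n
    have key : ∀ k, ϖ ^ (k + 1) ∣ e (n + 1) ^ p - e n := by
      intro k
      have d2 := dvd_pow_sub_pow hp hp2 (by omega : 1 ≤ k + 1) (he (n + 1) (k + 1))
      have hsp : (s (n + 1) (k + 1)) ^ p = s n (k + 2) := by
        show (c (n + 1 + (k + 1)) ^ p ^ (k + 1)) ^ p = c (n + (k + 2)) ^ p ^ (k + 2)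
        have hidx : n + 1 + (k + 1) = n + (k + 2) := by omega
        rw [← pow_mul, ← pow_succ, hidx]
      rw [hsp] at d2
      have d3 := he n (k + 2)
      obtain ⟨c1, hc1⟩ := d2
      obtain ⟨c2, hc2⟩ := d3
      refine ⟨ϖ * (c1 - c2), ?_⟩
      linear_combination hc1 - hc2
    have hz : e (n + 1) ^ p - e n = 0 := by
      refine eq_zero_of_forall_pow_dvd hcomp _ (fun m => ?_)
      match m with
      | 0 => simpa using one_dvd _
      | (k + 1) => exact key k
    exact sub_eq_zero.mp hz
  refine ⟨⟨fun n => Ideal.Quotient.mk _ (e n), fun n => ?_⟩, e 0, rfl, ?_⟩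
  · show (Ideal.Quotient.mk _ (e (n+1))) ^ p = Ideal.Quotient.mk _ (e n)
    rw [← map_pow]
    exact congrArg _ (hcompat n)
  · obtain ⟨c1, hc1⟩ := he 0 1
    obtain ⟨c2, hc2⟩ := hstep1 0
    have hc1' : e 0 - c 1 ^ p = ϖ * c1 := by
      simp only [hs_def] at hc1
      simpa [pow_one] using hc1
    have hc2' : c 1 ^ p - a = ϖ * c2 := by
      have ha : c 0 = a := by simp [hc_def]
      rw [ha] at hc2
      simpa [pow_one] using hc2
    exact ⟨c1 + c2, by linear_combination hc1' + hc2'⟩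

private lemma div_step {p : ℕ} [Fact p.Prime] {A : Type} [CommRing A] {ϖ : A}
    (hfs : ∀ x : A, ∃ y : A, x - y ^ p ∈ Ideal.span {ϖ ^ p})
    (hfi : ∀ x y : A, x ^ p - y ^ p ∈ Ideal.span {ϖ ^ p} → x - y ∈ Ideal.span {ϖ})
    {w c : A} (hwϖ : w ∣ ϖ) (hc : w ^ p ∣ c ^ p) : w ∣ c := by
  obtain ⟨d, hd⟩ := hc
  obtain ⟨d', hd'⟩ := hfs d
  obtain ⟨t, ht⟩ := Ideal.mem_span_singleton.mp hd'
  have h1 : c ^ p - (w * d') ^ p ∈ Ideal.span {ϖ ^ p} := by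
    refine Ideal.mem_span_singleton.mpr ⟨w ^ p * t, ?_⟩
    rw [mul_pow]
    linear_combination hd + w ^ p * ht
  obtain ⟨u1, hu1⟩ := Ideal.mem_span_singleton.mp (hfi c (w * d') h1)
  obtain ⟨u2, hu2⟩ := hwϖ
  exact ⟨d' + u2 * u1, by linear_combination hu1 + u1 * hu2⟩

private lemma torsion_step {p : ℕ} [Fact p.Prime] {A : Type} [CommRing A] {ϖ : A}
    (hp2 : ϖ ^ p ∣ (p : A))
    (hfs : ∀ x : A, ∃ y : A, x - y ^ p ∈ Ideal.span {ϖ ^ p})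
    (hfi : ∀ x y : A, x ^ p - y ^ p ∈ Ideal.span {ϖ ^ p} → x - y ∈ Ideal.span {ϖ})
    {w : A} {K : ℕ} (hK : 1 ≤ K) {v : Aˣ} (hwK : w ^ p ^ K = ϖ * v) {τ : A}
    (hτ : w ^ p * τ = 0) : ∃ σ, w * σ = 0 ∧ ϖ ∣ σ ^ p - τ := by
  have hp : p.Prime := Fact.out
  have hppow : 1 ≤ p ^ K := Nat.one_le_pow _ _ hp.pos
  obtain ⟨σ₀, hσ₀⟩ := hfs τ
  obtain ⟨t, ht⟩ := Ideal.mem_span_singleton.mp hσ₀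
  have h1 : (w * σ₀) ^ p - 0 ^ p ∈ Ideal.span {ϖ ^ p} := by
    refine Ideal.mem_span_singleton.mpr ⟨-(w ^ p * t), ?_⟩
    rw [zero_pow hp.ne_zero, mul_pow]
    linear_combination (-(w ^ p)) * ht + hτ
  obtain ⟨h0, hh0⟩ := Ideal.mem_span_singleton.mp (hfi (w * σ₀) 0 h1)
  set z : A := w ^ (p ^ K - 1) * ((v⁻¹ : Aˣ) : A) * h0 with hz_def
  have hww : w * w ^ (p ^ K - 1) = w ^ p ^ K := by
    rw [← pow_succ']
    congr 1
    omega
  have hvv : ((v : A)) * ((v⁻¹ : Aˣ) : A) = 1 := by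
    rw [← Units.val_mul, mul_inv_cancel, Units.val_one]
  have hwz : w * z = w * σ₀ := by
    calc w * z = (w * w ^ (p ^ K - 1)) * ((v⁻¹ : Aˣ) : A) * h0 := by rw [hz_def]; ring
    _ = ϖ * ((v : A) * ((v⁻¹ : Aˣ) : A)) * h0 := by rw [hww, hwK]; ring
    _ = ϖ * h0 := by rw [hvv]; ring
    _ = w * σ₀ := by linear_combination -hh0
  refine ⟨σ₀ - z, by rw [mul_sub, hwz, sub_self], ?_⟩
  obtain ⟨α, hα⟩ := pow_sub_pow_dvd hp (one_dvd ((σ₀ - z) - σ₀))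
  have h3 : ϖ ∣ z ^ p := by
    have d1 : ϖ ∣ w ^ p ^ K := ⟨v, hwK⟩
    have d2 : w ^ p ^ K ∣ w ^ ((p ^ K - 1) * p) := by
      refine pow_dvd_pow _ ?_
      have h2 : 2 ≤ p := hp.two_le
      have hpK : p ≤ p ^ K := by
        calc p = p ^ 1 := (pow_one p).symm
        _ ≤ p ^ K := Nat.pow_le_pow_right hp.pos hK
      have : (p ^ K - 1) * p = p ^ K * p - p := by
        rw [Nat.sub_mul, one_mul]
      rw [this]
      have h3 : p ^ K * 2 ≤ p ^ K * p := Nat.mul_le_mul_left _ h2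
      omega
    have d3 : w ^ ((p ^ K - 1) * p) ∣ z ^ p := by
      rw [hz_def, mul_pow, mul_pow, pow_mul]
      exact (dvd_mul_right _ _).mul_right _
    exact d1.trans (d2.trans d3)
  have h4 : ϖ ∣ (-z) ^ p := by
    rw [neg_pow]
    exact h3.mul_left _
  have h5 : ϖ ∣ (p : A) := (dvd_pow_self ϖ hp.ne_zero).trans hp2
  have h6 : ϖ ∣ σ₀ ^ p - τ := by
    have hh : (ϖ : A) ^ p ∣ σ₀ ^ p - τ := ⟨-t, by linear_combination -ht⟩
    exact (dvd_pow_self ϖ hp.ne_zero).trans hh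
  obtain ⟨g4, hg4⟩ := h4
  obtain ⟨g5, hg5⟩ := h5
  obtain ⟨g6, hg6⟩ := h6
  refine ⟨g4 + g5 * (1 * α) + g6, ?_⟩
  have hα' : (σ₀ - z) ^ p - σ₀ ^ p = (-z) ^ p + (p : A) * (1 * α) := by
    have : (σ₀ - z) - σ₀ = -z := by ring
    rw [this] at hα
    exact hα
  linear_combination hα' + hg4 + (1 * α) * hg5 + hg6

private lemma ker_sub {p : ℕ} [Fact p.Prime] {A : Type} [CommRing A] {ϖ : A}
    [CharP (A ⧸ Ideal.span {(p : A)}) p]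
    (hp2 : ϖ ^ p ∣ (p : A)) (hcomp : IsAdicComplete (Ideal.span {ϖ}) A)
    (hfs : ∀ x : A, ∃ y : A, x - y ^ p ∈ Ideal.span {ϖ ^ p})
    (hfi : ∀ x y : A, x ^ p - y ^ p ∈ Ideal.span {ϖ ^ p} → x - y ∈ Ideal.span {ϖ})
    (ϖb x : Perfection (A ⧸ Ideal.span {(p : A)}) p)
    (u : Aˣ)
    (hu : Perfection.coeff (A ⧸ Ideal.span {(p : A)}) p 0 ϖb =
      Ideal.Quotient.mk (Ideal.span {(p : A)}) ((u : A) * ϖ))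
    (hle : Ideal.span {(p : A)} ≤ Ideal.span {ϖ})
    (hx : Ideal.Quotient.factor (S := Ideal.span {(p : A)}) (T := Ideal.span {ϖ}) hle
      (Perfection.coeff (A ⧸ Ideal.span {(p : A)}) p 0 x) = 0) :
    x ∈ Ideal.span {ϖb} := by
  have hp : p.Prime := Fact.out
  obtain ⟨a, hac, ham⟩ := sharp_exists hp2 hcomp x
  obtain ⟨w, hwc, hwm⟩ := sharp_exists hp2 hcomp ϖb
  have ha0 : ϖ ∣ a 0 := by
    have h1 : Ideal.Quotient.mk (Ideal.span {ϖ}) (a 0) = 0 := by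
      rw [← Ideal.Quotient.factor_mk hle, ham 0, hx]
    exact Ideal.mem_span_singleton.mp (Ideal.Quotient.eq_zero_iff_mem.mp h1)
  have hw0 : (p : A) ∣ w 0 - (u : A) * ϖ := by
    rw [← Ideal.mem_span_singleton, ← Ideal.Quotient.mk_eq_mk_iff_sub_mem, hwm 0, hu]
  obtain ⟨g, hg⟩ := hw0
  obtain ⟨e, he⟩ := hp2
  have hpsplit : (ϖ : A) ^ p = ϖ * ϖ ^ (p - 1) := by
    rw [← pow_succ']
    congr 1
    have := hp.two_le
    omega
  have huu : ((u : A)) * ((u⁻¹ : Aˣ) : A) = 1 := by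
    rw [← Units.val_mul, mul_inv_cancel, Units.val_one]
  have hv0 : w 0 = ϖ * ((u : A) * (1 + ((u⁻¹ : Aˣ) : A) * (ϖ ^ (p - 1) * e * g))) := by
    have hgg : w 0 = (u : A) * ϖ + (p : A) * g := by linear_combination hg
    rw [hgg, he, hpsplit]
    linear_combination (-(ϖ * ϖ ^ (p-1) * e * g)) * huu
  have hunit : IsUnit ((u : A) * (1 + ((u⁻¹ : Aˣ) : A) * (ϖ ^ (p - 1) * e * g))) := by
    refine u.isUnit.mul (isUnit_one_add hcomp ?_)
    have h2 : 1 ≤ p - 1 := by have := hp.two_le; omega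
    refine Dvd.dvd.mul_left (Dvd.dvd.mul_right (Dvd.dvd.mul_right ?_ e) g) _
    exact dvd_pow_self ϖ (by omega)
  obtain ⟨v, hv⟩ := hunit
  have hw0v : w 0 = ϖ * (v : A) := by rw [hv0, hv]
  have hapow : ∀ n k, a (n + k) ^ p ^ k = a n := by
    intro n k
    induction k with
    | zero => simp
    | succ k ih =>
        have h1 : (a (n + k + 1) ^ p) ^ p ^ k = a (n + (k + 1)) ^ p ^ (k + 1) := by
          rw [← pow_mul, ← pow_succ']
          rfl
        rw [← h1, hac (n + k), ih]
  have hwpow : ∀ n k, w (n + k) ^ p ^ k = w n := by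
    intro n k
    induction k with
    | zero => simp
    | succ k ih =>
        have h1 : (w (n + k + 1) ^ p) ^ p ^ k = w (n + (k + 1)) ^ p ^ (k + 1) := by
          rw [← pow_mul, ← pow_succ']
          rfl
        rw [← h1, hwc (n + k), ih]
  have hwunits : ∀ n, w n ^ p ^ n = ϖ * (v : A) := by
    intro n
    have := hwpow 0 n
    rw [zero_add] at this
    rw [this, hw0v]
  have hvv : ((v : A)) * ((v⁻¹ : Aˣ) : A) = 1 := by
    rw [← Units.val_mul, mul_inv_cancel, Units.val_one]
  have hdvd : ∀ n, w n ∣ a n := by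
    intro n
    have hwdvdϖ : ∀ j, j ≤ n → w n ^ p ^ j ∣ ϖ := by
      intro j hj
      have h1 : w n ^ p ^ j ∣ w n ^ p ^ n := pow_dvd_pow _ (Nat.pow_le_pow_right hp.pos hj)
      refine h1.trans ⟨((v⁻¹ : Aˣ) : A), ?_⟩
      rw [hwunits n]
      linear_combination (-ϖ) * hvv
    have main : ∀ k, k ≤ n → w n ^ p ^ (n - k) ∣ a n ^ p ^ (n - k) := by
      intro k
      induction k with
      | zero =>
          intro _
          obtain ⟨e0, he0⟩ := ha0
          have h2 : a n ^ p ^ n = a 0 := by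
            have := hapow 0 n
            rwa [zero_add] at this
          rw [Nat.sub_zero, h2, he0]
          exact (hwdvdϖ n le_rfl).mul_right e0
      | succ k ih =>
          intro hk
          have prev := ih (by omega)
          have hj : n - k = (n - (k + 1)) + 1 := by omega
          rw [hj] at prev
          have hW : (w n ^ p ^ (n - (k + 1))) ^ p ∣ (a n ^ p ^ (n - (k + 1))) ^ p := by
            rw [← pow_mul, ← pow_mul, ← pow_succ]
            exact prev
          exact div_step hfs hfi (hwdvdϖ _ (by omega)) hW
    have hfin := main n le_rfl
    simpa using hfin
  have step : ∀ m (t : A), w m * t = a m →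
      ∃ t', w (m + 1) * t' = a (m + 1) ∧ ϖ ∣ t' ^ p - t := by
    intro m t htm
    obtain ⟨q, hq⟩ := hdvd (m + 1)
    have hτ : w (m + 1) ^ p * (t - q ^ p) = 0 := by
      have h1 : w (m + 1) ^ p = w m := hwc m
      have h3 : w m * q ^ p = a m := by
        calc w m * q ^ p = (w (m + 1) * q) ^ p := by rw [mul_pow, h1]
        _ = a (m + 1) ^ p := by rw [← hq]
        _ = a m := hac m
      rw [h1]
      linear_combination htm - h3
    obtain ⟨σ, hσ1, hσ2⟩ := torsion_step ⟨e, he⟩ hfs hfi (by omega) (hwunits (m + 1)) hτ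
    refine ⟨q + σ, by rw [mul_add, hσ1, add_zero, ← hq], ?_⟩
    obtain ⟨α, hα⟩ := pow_sub_pow_dvd hp (one_dvd ((q + σ) - q))
    have hα' : (q + σ) ^ p - q ^ p = σ ^ p + (p : A) * (1 * α) := by
      have h4 : (q + σ) - q = σ := by ring
      rw [h4] at hα
      exact hα
    obtain ⟨g1, hg1⟩ := hσ2
    have h5 : ϖ ∣ (p : A) := (dvd_pow_self ϖ hp.ne_zero).trans ⟨e, he⟩
    obtain ⟨g2, hg2⟩ := h5
    exact ⟨g1 + g2 * (1 * α), by linear_combination hα' + hg1 + (1 * α) * hg2⟩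
  let T : ∀ m, {t : A // w m * t = a m} := fun m =>
    Nat.rec ⟨(hdvd 0).choose, (hdvd 0).choose_spec.symm⟩
      (fun m prev => ⟨(step m prev.1 prev.2).choose, (step m prev.1 prev.2).choose_spec.1⟩) m
  set t : ℕ → A := fun m => (T m).1 with ht_def
  have ht : ∀ m, w m * t m = a m := fun m => (T m).2
  have hT : ∀ m, ϖ ∣ t (m + 1) ^ p - t m := fun m => (step m (T m).1 (T m).2).choose_spec.2
  set s2 : ℕ → ℕ → A := fun n k => t (n + k) ^ p ^ k with hs2_def
  have hs2cauchy : ∀ n k, ϖ ^ (1 + k) ∣ s2 n (k + 1) - s2 n k := by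
    intro n k
    have h0 : ϖ ^ 1 ∣ t (n + k + 1) ^ p - t (n + k) := by
      rw [pow_one]
      exact hT (n + k)
    have h1 := dvd_pow_sub_pow_iter hp ⟨e, he⟩ le_rfl h0 k
    have h2 : (t (n + k + 1) ^ p) ^ p ^ k = s2 n (k + 1) := by
      show _ = t (n + (k + 1)) ^ p ^ (k + 1)
      rw [← pow_mul, ← pow_succ']
      rfl
    rwa [h2] at h1
  have hlim := fun n => exists_limit hcomp (s2 n)
    (fun k => (pow_dvd_pow _ (by omega : k ≤ 1 + k)).trans (hs2cauchy n k))
  choose b hb using hlim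
  have hbc : ∀ n, b (n + 1) ^ p = b n := by
    intro n
    have key : ∀ k, ϖ ^ (k + 1) ∣ b (n + 1) ^ p - b n := by
      intro k
      have d2 := dvd_pow_sub_pow hp ⟨e, he⟩ (by omega : 1 ≤ k + 1) (hb (n + 1) (k + 1))
      have hsp : (s2 (n + 1) (k + 1)) ^ p = s2 n (k + 2) := by
        show (t (n + 1 + (k + 1)) ^ p ^ (k + 1)) ^ p = t (n + (k + 2)) ^ p ^ (k + 2)
        have hidx : n + 1 + (k + 1) = n + (k + 2) := by omega
        rw [← pow_mul, ← pow_succ, hidx]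
      rw [hsp] at d2
      obtain ⟨c1, hc1⟩ := d2
      obtain ⟨c2, hc2⟩ := hb n (k + 2)
      exact ⟨ϖ * (c1 - c2), by linear_combination hc1 - hc2⟩
    have hz : b (n + 1) ^ p - b n = 0 := by
      refine eq_zero_of_forall_pow_dvd hcomp _ (fun m => ?_)
      match m with
      | 0 => simpa using one_dvd _
      | (k + 1) => exact key k
    exact sub_eq_zero.mp hz
  have hbdiv : ∀ n, w n * b n = a n := by
    intro n
    have hall : ∀ k, ϖ ^ k ∣ w n * b n - a n := by
      intro k
      obtain ⟨c1, hc1⟩ := hb n k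
      have h2 : w n * s2 n k = a n := by
        calc w n * t (n + k) ^ p ^ k = (w (n + k) * t (n + k)) ^ p ^ k := by
              rw [mul_pow, hwpow n k]
        _ = a (n + k) ^ p ^ k := by rw [ht (n + k)]
        _ = a n := hapow n k
      exact ⟨w n * c1, by linear_combination (w n) * hc1 + h2⟩
    exact sub_eq_zero.mp (eq_zero_of_forall_pow_dvd hcomp _ hall)
  refine Ideal.mem_span_singleton.mpr
    ⟨⟨fun n => Ideal.Quotient.mk _ (b n), fun n => ?_⟩, ?_⟩
  · show (Ideal.Quotient.mk _ (b (n + 1))) ^ p = Ideal.Quotient.mk _ (b n)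
    rw [← map_pow]
    exact congrArg _ (hbc n)
  · refine Perfection.ext fun n => ?_
    show _ = Perfection.coeff _ p n ϖb * Ideal.Quotient.mk _ (b n)
    rw [← ham n, ← hwm n, ← map_mul, hbdiv n]


theorem tilt_mod_pi_iso
    (p : ℕ) [Fact p.Prime] (A : Type) [CommRing A] (ϖ : A)
    [CharP (A ⧸ Ideal.span {(p : A)}) p]
    (hA : IsPerfectoid p A ϖ)
    (ϖb : Perfection (A ⧸ Ideal.span {(p : A)}) p)
    (hϖb : IsTilt p A ϖ ϖb) :
    Function.Surjective
      ((Ideal.Quotient.factor (S := Ideal.span {(p : A)}) (T := Ideal.span {ϖ})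
          (Ideal.span_le.mpr (Set.singleton_subset_iff.mpr (Ideal.mem_span_singleton.mpr
            ((dvd_pow_self ϖ (Fact.out : p.Prime).ne_zero).trans hA.pow_dvd))))).comp
        (Perfection.coeff (A ⧸ Ideal.span {(p : A)}) p 0)) ∧
    RingHom.ker
      ((Ideal.Quotient.factor (S := Ideal.span {(p : A)}) (T := Ideal.span {ϖ})
          (Ideal.span_le.mpr (Set.singleton_subset_iff.mpr (Ideal.mem_span_singleton.mpr
            ((dvd_pow_self ϖ (Fact.out : p.Prime).ne_zero).trans hA.pow_dvd))))).comp
        (Perfection.coeff (A ⧸ Ideal.span {(p : A)}) p 0)) = Ideal.span {ϖb} ∧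
    Nonempty ((Perfection (A ⧸ Ideal.span {(p : A)}) p ⧸ Ideal.span {ϖb}) ≃+*
      (A ⧸ Ideal.span {ϖ})) := by
  have hp : p.Prime := Fact.out
  have hcomp := hA.complete
  have hle : Ideal.span {(p : A)} ≤ Ideal.span {ϖ} :=
    Ideal.span_le.mpr (Set.singleton_subset_iff.mpr (Ideal.mem_span_singleton.mpr
      ((dvd_pow_self ϖ (Fact.out : p.Prime).ne_zero).trans hA.pow_dvd)))
  obtain ⟨u, hu⟩ := hϖb
  have hsurj : Function.Surjective
      ((Ideal.Quotient.factor (S := Ideal.span {(p : A)}) (T := Ideal.span {ϖ}) hle).comp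
        (Perfection.coeff (A ⧸ Ideal.span {(p : A)}) p 0)) := by
    intro yq
    obtain ⟨aq, rfl⟩ := Ideal.Quotient.mk_surjective yq
    obtain ⟨x, e0, hx1, hx2⟩ := f_surj hA.pow_dvd hcomp hA.frobenius_surjective aq
    refine ⟨x, ?_⟩
    rw [RingHom.comp_apply, hx1, Ideal.Quotient.factor_mk,
      Ideal.Quotient.mk_eq_mk_iff_sub_mem]
    exact Ideal.mem_span_singleton.mpr hx2
  have hker : RingHom.ker
      ((Ideal.Quotient.factor (S := Ideal.span {(p : A)}) (T := Ideal.span {ϖ}) hle).comp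
        (Perfection.coeff (A ⧸ Ideal.span {(p : A)}) p 0)) = Ideal.span {ϖb} := by
    apply le_antisymm
    · intro y hy
      rw [RingHom.mem_ker, RingHom.comp_apply] at hy
      exact ker_sub hA.pow_dvd hcomp hA.frobenius_surjective hA.frobenius_injective ϖb y u hu
        hle hy
    · rw [Ideal.span_le, Set.singleton_subset_iff]
      rw [SetLike.mem_coe, RingHom.mem_ker, RingHom.comp_apply, hu, Ideal.Quotient.factor_mk,
        Ideal.Quotient.eq_zero_iff_mem]
      exact Ideal.mem_span_singleton.mpr (dvd_mul_left ϖ (u : A))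
  exact ⟨hsurj, hker,
    ⟨(Ideal.quotEquivOfEq hker.symm).trans (RingHom.quotientKerEquivOfSurjective hsurj)⟩⟩
end

section
/- Let p be a prime, let (A, ϖ) be a perfectoid ring with tilt A♭, and let ϖ♭ ∈ A♭ be a tilt of ϖ. Then A♭ is ϖ♭-adically complete, i.e., A♭ is complete and separated for the adic topology of the ideal generated by ϖ♭. -/
set_option linter.unusedSectionVars false

section Aux
variable {p : ℕ} {A : Type} [CommRing A] {ϖ : A}

theorem binomAux (hp : p.Prime) (x d : A) :
    ∃ b, (x + d)^p = x^p + d^p + p * (d * b) := by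
  refine ⟨∑ k ∈ Finset.Ioo 0 p, x ^ k * d ^ (p - k - 1) * ((p.choose k / p : ℕ) : A), ?_⟩
  have hs : ∑ k ∈ Finset.Ioo 0 p, x ^ k * d ^ (p - k) * ((p.choose k / p : ℕ) : A)
      = d * ∑ k ∈ Finset.Ioo 0 p, x ^ k * d ^ (p - k - 1) * ((p.choose k / p : ℕ) : A) := by
    rw [Finset.mul_sum]
    refine Finset.sum_congr rfl fun k hk => ?_
    simp only [Finset.mem_Ioo] at hk
    have h1 : p - k - 1 + 1 = p - k := by omega
    calc x ^ k * d ^ (p - k) * ((p.choose k / p : ℕ) : A)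
        = x ^ k * (d ^ (p-k-1) * d^1) * ((p.choose k / p : ℕ) : A) := by rw [← pow_add, h1]
      _ = d * (x ^ k * d ^ (p - k - 1) * ((p.choose k / p : ℕ) : A)) := by ring
  rw [add_pow_prime_eq' hp, hs]

theorem hausA (hc : IsAdicComplete (Ideal.span {ϖ}) A) {x : A}
    (h : ∀ m, ϖ ^ m ∣ x) : x = 0 := by
  refine hc.toIsHausdorff.haus' x fun n => ?_
  rw [SModEq.zero, smul_eq_mul, Ideal.mul_top, Ideal.span_singleton_pow, Ideal.mem_span_singleton]
  exact h n

theorem eqA (hc : IsAdicComplete (Ideal.span {ϖ}) A) {x y : A}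
    (h : ∀ m, ϖ ^ m ∣ x - y) : x = y :=
  sub_eq_zero.mp (hausA hc h)

theorem limA (hc : IsAdicComplete (Ideal.span {ϖ}) A) (s : ℕ → A)
    (hs : ∀ k, ϖ ^ (k+1) ∣ s (k+1) - s k) : ∃ L, ∀ k, ϖ ^ k ∣ L - s k := by
  have pair : ∀ m n, m ≤ n → ϖ ^ m ∣ s n - s m := by
    intro m n h
    induction n with
    | zero => interval_cases m; simp
    | succ n ih =>
      rcases Nat.lt_or_ge m (n+1) with h'|h'
      · have h1 : ϖ ^ m ∣ s n - s m := ih (by omega)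
        have h2 : ϖ ^ m ∣ s (n+1) - s n :=
          dvd_trans (pow_dvd_pow ϖ (by omega)) (hs n)
        simpa using dvd_add h2 h1
      · have : m = n + 1 := by omega
        subst this; simp
  obtain ⟨L, hL⟩ := hc.toIsPrecomplete.prec' s (by
    intro m n h
    rw [SModEq.sub_mem, smul_eq_mul, Ideal.mul_top, Ideal.span_singleton_pow,
      Ideal.mem_span_singleton]
    have := dvd_neg.mpr (pair m n h)
    rwa [neg_sub] at this
    )
  refine ⟨L, fun k => ?_⟩
  have := hL k
  rw [SModEq.sub_mem, smul_eq_mul, Ideal.mul_top, Ideal.span_singleton_pow,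
    Ideal.mem_span_singleton] at this
  simpa using dvd_neg.mpr this

theorem rootIter {t : ℕ → A} (h : ∀ n, t (n+1)^p = t n) :
    ∀ n k, t (n+k) ^ p ^ k = t n := by
  intro n k
  induction k generalizing n with
  | zero => simp
  | succ k ih =>
    have e1 : n + (k+1) = (n+1) + k := by omega
    rw [e1, pow_succ, pow_mul, ih, h n]

theorem powGain1 (hp : p.Prime) (hd : ϖ ^ p ∣ (p:A)) {x y : A} {m : ℕ}
    (h : ϖ ^ (m+1) ∣ x - y) : ϖ ^ (m+2) ∣ x ^ p - y ^ p := by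
  obtain ⟨b, hb⟩ := binomAux hp y (x - y)
  have hx : x ^ p - y ^ p = (x-y)^p + (p:A) * ((x-y)*b) := by
    have : y + (x - y) = x := by ring
    rw [this] at hb
    rw [hb]; ring
  have h1 : ϖ ^ (m+2) ∣ (x - y)^p := by
    have h0 : ϖ ^ ((m+1)*p) ∣ (x - y)^p := by
      rw [pow_mul]; exact pow_dvd_pow_of_dvd h p
    refine dvd_trans (pow_dvd_pow ϖ ?_) h0
    nlinarith [hp.two_le]
  have h2 : ϖ ^ (m+2) ∣ (p:A) * ((x-y)*b) := by
    have : ϖ ^ (p + (m+1)) ∣ (p:A) * (x-y) := by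
      rw [pow_add]; exact mul_dvd_mul hd h
    have h0 : ϖ ^ (p + (m+1)) ∣ (p:A) * ((x-y)*b) := by
      rw [← mul_assoc]; exact Dvd.dvd.mul_right this b
    exact dvd_trans (pow_dvd_pow ϖ (by have := hp.two_le; omega)) h0
  rw [hx]; exact dvd_add h1 h2

theorem powGain (hp : p.Prime) (hd : ϖ ^ p ∣ (p:A)) {x y : A} {m : ℕ}
    (h : ϖ ^ (m+1) ∣ x - y) : ∀ k, ϖ ^ (m+1+k) ∣ x ^ p ^ k - y ^ p ^ k := by
  intro k
  induction k with
  | zero => simpa using h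
  | succ k ih =>
    have ih' : ϖ ^ (m + k + 1) ∣ x ^ p ^ k - y ^ p ^ k := by
      have e : m + k + 1 = m + 1 + k := by omega
      rw [e]; exact ih
    have := powGain1 (m := m + k) hp hd ih' 
    have e : m + 1 + (k+1) = m + k + 2 := by omega
    rw [e, show p^(k+1) = p^k * p from pow_succ p k, pow_mul, pow_mul]
    exact this

end Aux

section Sharp
variable {p : ℕ} [Fact p.Prime] {A : Type} [CommRing A] {ϖ : A}
  [CharP (A ⧸ Ideal.span {(p : A)}) p]

theorem sharpSystem (hc : IsAdicComplete (Ideal.span {ϖ}) A) (hd : ϖ ^ p ∣ (p : A))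
    (x : Perfection (A ⧸ Ideal.span {(p : A)}) p) :
    ∃ t : ℕ → A, (∀ n, t (n+1) ^ p = t n) ∧
      ∀ n, Ideal.Quotient.mk (Ideal.span {(p:A)}) (t n) =
        Perfection.coeff (A ⧸ Ideal.span {(p : A)}) p n x := by
  choose a ha using fun n =>
    Ideal.Quotient.mk_surjective (I := Ideal.span {(p:A)})
      (Perfection.coeff (A ⧸ Ideal.span {(p : A)}) p n x)
  have hstep : ∀ m, (p:A) ∣ a (m+1) ^ p - a m := by
    intro m
    have h0 : Ideal.Quotient.mk (Ideal.span {(p:A)}) (a (m+1) ^ p - a m) = 0 := by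
      rw [map_sub, map_pow, ha, ha, Perfection.coeff_pow_p', sub_self]
    rwa [Ideal.Quotient.eq_zero_iff_mem, Ideal.mem_span_singleton] at h0
  have key : ∀ n, ∃ t, (∀ k, ϖ ^ k ∣ t - a (n+(k+1)) ^ p ^ (k+1)) ∧
      Ideal.Quotient.mk (Ideal.span {(p:A)}) t =
        Perfection.coeff (A ⧸ Ideal.span {(p : A)}) p n x := by
    intro n
    set s : ℕ → A := fun k => a (n+k) ^ p ^ k with hs
    have hsd : ∀ k, ∃ w, s (k+1) - s k = (p:A)^(k+1) * w := by
      intro k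
      have h1 : (p:A)^(k+1) ∣ (a (n+k+1) ^ p) ^ p ^ k - a (n+k) ^ p ^ k :=
        dvd_sub_pow_of_dvd_sub (hstep (n+k)) k
      obtain ⟨w, hw⟩ := h1
      refine ⟨w, ?_⟩
      show a (n+(k+1)) ^ p ^ (k+1) - a (n+k) ^ p ^ k = (p:A)^(k+1) * w
      rw [show n+(k+1) = n+k+1 from by omega,
        show a (n+k+1) ^ p ^ (k+1) = (a (n+k+1) ^ p) ^ p ^ k from by
          rw [← pow_mul, ← pow_succ'], hw]
    choose w hw using hsd
    set D : ℕ → A := fun k => ∑ j ∈ Finset.range k, (p:A)^j * w j with hD0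
    have hD : ∀ k, s k = a n + (p:A) * D k := by
      intro k
      induction k with
      | zero => simp [hD0, hs]
      | succ k ih =>
        have : s (k+1) = s k + (p:A)^(k+1) * w k := by rw [← hw k]; ring
        rw [this, ih, hD0]
        simp only [Finset.sum_range_succ]
        ring
    have hstepD : ∀ k, ϖ^(k+1) ∣ D (k+2) - D (k+1) := by
      intro k
      have : D (k+2) - D (k+1) = (p:A)^(k+1) * w (k+1) := by
        simp only [hD0, Finset.sum_range_succ]; ring
      have h2 : (ϖ^p)^(k+1) ∣ (p:A)^(k+1) := pow_dvd_pow_of_dvd hd (k+1)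
      have h3 : ϖ ^ (p*(k+1)) ∣ (p:A)^(k+1) := by rw [pow_mul]; exact h2
      have h4 : ϖ ^ (k+1) ∣ (p:A)^(k+1) :=
        dvd_trans (pow_dvd_pow ϖ (by have := (Fact.out : p.Prime).two_le; nlinarith)) h3
      rw [this]; exact Dvd.dvd.mul_right h4 _
    obtain ⟨L, hL⟩ := limA hc (fun k => D (k+1)) hstepD
    refine ⟨a n + (p:A) * L, fun k => ?_, ?_⟩
    · have e2 : a n + (p:A) * L - a (n+(k+1)) ^ p ^ (k+1) = (p:A) * (L - D (k+1)) := by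
        have := hD (k+1)
        simp only [hs] at this
        rw [this]; ring
      rw [e2]
      exact Dvd.dvd.mul_left (hL k) _
    · rw [map_add, map_mul, ha]
      have : Ideal.Quotient.mk (Ideal.span {(p:A)}) (p:A) = 0 := by
        rw [Ideal.Quotient.eq_zero_iff_mem]
        exact Ideal.subset_span rfl
      rw [this, zero_mul, add_zero]
  choose t ht1 ht2 using key
  refine ⟨t, fun n => ?_, ht2⟩
  refine eqA hc fun m => ?_
  have h1p : ϖ^m ∣ t (n+1)^p - (a (n+1+(m+1)) ^ p ^ (m+1))^p :=
    dvd_trans (ht1 (n+1) m) (sub_dvd_pow_sub_pow _ _ p)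
  have h2 : ϖ^m ∣ t n - a (n+(m+2)) ^ p ^ (m+2) :=
    dvd_trans (pow_dvd_pow ϖ (by omega)) (ht1 n (m+1))
  have e : (a (n+1+(m+1)) ^ p ^ (m+1))^p = a (n+(m+2)) ^ p ^ (m+2) := by
    have e1 : n+1+(m+1) = n+(m+2) := by omega
    rw [e1, ← pow_mul, ← pow_succ]
  rw [e] at h1p
  have := dvd_sub h1p h2
  rwa [sub_sub_sub_cancel_right] at this

end Sharp

section Claims
variable {p : ℕ} [Fact p.Prime] {A : Type} [CommRing A] {ϖ : A}

theorem liftDvd (hd : ϖ ^ p ∣ (p:A)) {a : A}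
    (h : Ideal.Quotient.mk (Ideal.span {(p:A)}) ϖ ∣ Ideal.Quotient.mk (Ideal.span {(p:A)}) a) :
    ϖ ∣ a := by
  obtain ⟨r, hr⟩ := h
  obtain ⟨r', hr'⟩ := Ideal.Quotient.mk_surjective r
  have h0 : Ideal.Quotient.mk (Ideal.span {(p:A)}) (a - ϖ * r') = 0 := by
    rw [map_sub, map_mul, hr', hr, sub_self]
  rw [Ideal.Quotient.eq_zero_iff_mem, Ideal.mem_span_singleton] at h0
  have hϖp : ϖ ∣ (p:A) :=
    dvd_trans (dvd_pow_self ϖ (Fact.out : p.Prime).ne_zero) hd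
  obtain ⟨s, hs⟩ := h0
  have : a = ϖ * r' + (p:A) * s := by rw [← hs]; ring
  rw [this]
  exact dvd_add (Dvd.dvd.mul_right dvd_rfl r') (Dvd.dvd.mul_right hϖp s)

theorem pi_dvd_pi (π : ℕ → A) (u' : Aˣ)
    (hroot : ∀ n, π (n+1)^p = π n) (hπ0 : π 0 = ϖ * u') (n : ℕ) :
    π n ^ p ^ n = ϖ * u' := by
  have := rootIter hroot 0 n
  rw [Nat.zero_add] at this
  rw [this, hπ0]

theorem pi_dvd_w (π : ℕ → A) (u' : Aˣ)
    (hroot : ∀ n, π (n+1)^p = π n) (hπ0 : π 0 = ϖ * u') (n : ℕ) :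
    π n ∣ ϖ := by
  have hE := pi_dvd_pi π u' hroot hπ0 n
  have hϖeq : ϖ = π n ^ p ^ n * ↑u'⁻¹ := by
    rw [hE, Units.mul_inv_cancel_right]
  have h1 : 1 ≤ p ^ n := Nat.one_le_pow _ _ (Fact.out : p.Prime).pos
  refine ⟨π n ^ (p ^ n - 1) * ↑u'⁻¹, ?_⟩
  rw [hϖeq, ← mul_assoc, ← pow_succ', show p ^ n - 1 + 1 = p ^ n from by omega]

theorem claimE (hA : IsPerfectoid p A ϖ) (π : ℕ → A) (u' : Aˣ)
    (hroot : ∀ n, π (n+1)^p = π n) (hπ0 : π 0 = ϖ * u') :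
    ∀ n (c : A), π n ∣ c ^ p → π (n+1) ∣ c := by
  intro n c hc
  obtain ⟨d, hdd⟩ := hc
  obtain ⟨e, he⟩ := hA.frobenius_surjective d
  have h1 : c ^ p - (π (n+1) * e) ^ p ∈ Ideal.span {ϖ ^ p} := by
    have heq : c^p - (π (n+1)*e)^p = π (n+1)^p * (d - e^p) := by
      rw [mul_pow, mul_sub, hroot n, ← hdd]
    rw [heq]
    exact Ideal.mul_mem_left _ _ he
  have h2 := hA.frobenius_injective c (π (n+1)*e) h1
  rw [Ideal.mem_span_singleton] at h2
  obtain ⟨z, hz⟩ := h2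
  have hceq : c = π (n+1) * e + ϖ * z := by rw [← hz]; ring
  rw [hceq]
  exact dvd_add (Dvd.dvd.mul_right dvd_rfl e)
    (Dvd.dvd.mul_right (pi_dvd_w π u' hroot hπ0 (n+1)) z)

theorem claimC (hA : IsPerfectoid p A ϖ) (π : ℕ → A) (u' : Aˣ)
    (hroot : ∀ n, π (n+1)^p = π n) (hπ0 : π 0 = ϖ * u') :
    ∀ n (c : A), π 0 ∣ c ^ p ^ n → π n ∣ c := by
  intro n
  induction n with
  | zero => intro c hc; simpa using hc
  | succ n ih =>
    intro c hc
    refine claimE hA π u' hroot hπ0 n c (ih (c^p) ?_)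
    rw [← pow_mul, ← pow_succ']
    exact hc

theorem negp (hp : p.Prime) (hd : ϖ ^ p ∣ (p:A)) (h : A) : ϖ ∣ h^p + (-h)^p := by
  have hϖp : ϖ ∣ (p:A) := dvd_trans (dvd_pow_self ϖ hp.ne_zero) hd
  rcases hp.eq_two_or_odd' with h2 | hodd
  · subst h2
    have : h^2 + (-h)^2 = (2:A) * h^2 := by ring
    rw [this]
    exact Dvd.dvd.mul_right (by exact_mod_cast hϖp) _
  · rw [hodd.neg_pow]
    simp

theorem claimG (hA : IsPerfectoid p A ϖ) (π : ℕ → A) (u' : Aˣ)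
    (hroot : ∀ n, π (n+1)^p = π n) (hπ0 : π 0 = ϖ * u') :
    ∀ n (δ : A), π n * δ = 0 → ∃ h, π (n+1) * h = 0 ∧ ϖ ∣ δ - h^p := by
  intro n δ hδ
  have hp : p.Prime := Fact.out
  obtain ⟨g, hg⟩ := hA.frobenius_surjective δ
  have h1 : (π (n+1) * g) ^ p - 0 ^ p ∈ Ideal.span {ϖ ^ p} := by
    have heq : (π (n+1) * g)^p - 0^p = - (π n * (δ - g^p)) := by
      rw [mul_pow, hroot n, zero_pow hp.ne_zero, mul_sub, hδ]; ring
    rw [heq]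
    exact neg_mem (Ideal.mul_mem_left _ _ hg)
  have h2 := hA.frobenius_injective (π (n+1) * g) 0 h1
  rw [sub_zero, Ideal.mem_span_singleton] at h2
  obtain ⟨m, hm⟩ := h2
  have hE := pi_dvd_pi π u' hroot hπ0 (n+1)
  have h1le : 1 ≤ p ^ (n+1) := Nat.one_le_pow _ _ hp.pos
  set c₀ := π (n+1) ^ (p^(n+1) - 1) * (↑u'⁻¹ * m) with hc₀
  have hpc : π (n+1) * c₀ = ϖ * m := by
    rw [hc₀, ← mul_assoc, ← pow_succ']
    rw [show p^(n+1) - 1 + 1 = p^(n+1) from by omega, hE, mul_assoc,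
      Units.mul_inv_cancel_left]
  refine ⟨g - c₀, ?_, ?_⟩
  · rw [mul_sub, hpc, hm, sub_self]
  · obtain ⟨b, hb⟩ := binomAux hp g (-c₀)
    have heq : δ - (g - c₀)^p
        = (δ - g^p) - ((-c₀)^p + c₀^p) + c₀^p - (p:A) * (-c₀ * b) := by
      rw [show g - c₀ = g + (-c₀) from by ring, hb]; ring
    rw [heq]
    have hϖp2 : ϖ ∣ ϖ^p := dvd_pow_self ϖ hp.ne_zero
    have d1 : ϖ ∣ δ - g^p := by
      rw [Ideal.mem_span_singleton] at hg
      exact dvd_trans hϖp2 hg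
    have d2 : ϖ ∣ (-c₀)^p + c₀^p := by
      have := negp hp hA.pow_dvd c₀
      rwa [add_comm] at this
    have d3 : ϖ ∣ c₀^p := by
      have hπE : ϖ ∣ π (n+1) ^ (p^(n+1)) := ⟨↑u', hE⟩
      have h2le : 2 ≤ p^(n+1) :=
        le_trans hp.two_le (Nat.le_self_pow (by omega) p)
      have h5 : π (n+1)^(p^(n+1)) ∣ π (n+1)^((p^(n+1) - 1)*p) :=
        pow_dvd_pow _ (by
          obtain ⟨E', hE'⟩ : ∃ E', p^(n+1) = E' + 2 := ⟨p^(n+1)-2, by omega⟩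
          rw [hE', show E'+2-1 = E'+1 from by omega]
          have := hp.two_le
          nlinarith)
      have hce : c₀^p = π (n+1)^((p^(n+1)-1)*p) * (↑u'⁻¹ * m : A)^p := by
        rw [hc₀, mul_pow, pow_mul]
      rw [hce]
      exact Dvd.dvd.mul_right (dvd_trans hπE h5) _
    have d4 : ϖ ∣ (p:A) * (-c₀ * b) :=
      Dvd.dvd.mul_right (dvd_trans hϖp2 hA.pow_dvd) _
    exact dvd_sub (dvd_add (dvd_sub d1 d2) d3) d4

end Claims

section Div
variable {p : ℕ} [Fact p.Prime] {A : Type} [CommRing A] {ϖ : A}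
  [CharP (A ⧸ Ideal.span {(p : A)}) p]

theorem tiltDvd (hA : IsPerfectoid p A ϖ)
    (ϖb : Perfection (A ⧸ Ideal.span {(p : A)}) p) (π : ℕ → A) (u' : Aˣ)
    (hroot : ∀ n, π (n+1)^p = π n) (hπ0 : π 0 = ϖ * u')
    (hπmk : ∀ n, Ideal.Quotient.mk (Ideal.span {(p:A)}) (π n) =
      Perfection.coeff (A ⧸ Ideal.span {(p : A)}) p n ϖb)
    (x : Perfection (A ⧸ Ideal.span {(p : A)}) p)
    (h0 : Ideal.Quotient.mk (Ideal.span {(p:A)}) ϖ ∣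
      Perfection.coeff (A ⧸ Ideal.span {(p : A)}) p 0 x) :
    ϖb ∣ x := by
  have hp : p.Prime := Fact.out
  have hc := hA.complete
  have hd := hA.pow_dvd
  obtain ⟨t, ht1, ht2⟩ := sharpSystem hc hd x
  have htd : ∀ n, π n ∣ t n := by
    intro n
    refine claimC hA π u' hroot hπ0 n (t n) ?_
    have hT := rootIter ht1 0 n
    rw [Nat.zero_add] at hT
    rw [hT]
    have hϖt : ϖ ∣ t 0 := liftDvd hd (by rw [ht2 0]; exact h0)
    obtain ⟨z, hz⟩ := hϖt
    refine ⟨↑u'⁻¹ * z, ?_⟩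
    rw [hz, hπ0, mul_assoc, Units.mul_inv_cancel_left]
  have step : ∀ n (a : A), π n * a = t n →
      ∃ b : A, π (n+1) * b = t (n+1) ∧ ϖ ∣ b^p - a := by
    intro n a ha
    obtain ⟨q, hq⟩ := htd (n+1)
    have hδ : π n * (q^p - a) = 0 := by
      have h1 : π n * q^p = t n := by
        calc π n * q^p = (π (n+1) * q)^p := by rw [mul_pow, hroot n]
          _ = t (n+1) ^ p := by rw [← hq]
          _ = t n := ht1 n
      rw [mul_sub, h1, ha, sub_self]
    obtain ⟨h, hh1, hh2⟩ := claimG hA π u' hroot hπ0 n (q^p - a) hδ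
    refine ⟨q - h, ?_, ?_⟩
    · rw [mul_sub, ← hq, hh1, sub_zero]
    · obtain ⟨b, hb⟩ := binomAux hp q (-h)
      have heq : (q - h)^p - a = ((q^p - a) - h^p) + (h^p + (-h)^p) + (p:A)*(-h*b) := by
        rw [show q - h = q + (-h) from by ring, hb]; ring
      rw [heq]
      exact dvd_add (dvd_add hh2 (negp hp hd h))
        (Dvd.dvd.mul_right (dvd_trans (dvd_pow_self ϖ hp.ne_zero) hd) _)
  obtain ⟨q0, hq0⟩ := htd 0
  let Q : ∀ n, {a : A // π n * a = t n} := fun n => Nat.rec ⟨q0, hq0.symm⟩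
    (fun n prev => ⟨(step n prev.1 prev.2).choose, (step n prev.1 prev.2).choose_spec.1⟩) n
  have hQ : ∀ n, π n * (Q n).1 = t n := fun n => (Q n).2
  have hQs : ∀ n, ϖ ∣ ((Q (n+1)).1)^p - (Q n).1 := fun n =>
    (step n (Q n).1 (Q n).2).choose_spec.2
  have hcau : ∀ n k, ϖ^(k+1) ∣ (Q (n+(k+1))).1 ^ p^(k+1) - (Q (n+k)).1 ^ p^k := by
    intro n k
    have h1 : ϖ^(0+1) ∣ ((Q (n+k+1)).1)^p - (Q (n+k)).1 := by simpa using hQs (n+k)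
    have h2 := powGain hp hd h1 k
    have e : (((Q (n+k+1)).1)^p)^p^k = (Q (n+(k+1))).1 ^ p^(k+1) := by
      rw [← pow_mul, ← pow_succ']
      rfl
    rw [e] at h2
    have e2 : 0+1+k = k+1 := by omega
    rwa [e2] at h2
  have hlim : ∀ n, ∃ L, ∀ k, ϖ^k ∣ L - (Q (n+k)).1 ^ p ^ k :=
    fun n => limA hc (fun k => (Q (n+k)).1 ^ p ^ k) (hcau n)
  choose qt hqt using hlim
  have hπq : ∀ n, π n * qt n = t n := by
    intro n
    refine eqA hc fun k => ?_
    have h1 : π n * ((Q (n+k)).1 ^ p^k) = t n := by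
      calc π n * (Q (n+k)).1 ^ p^k = (π (n+k))^(p^k) * (Q (n+k)).1 ^ p^k := by
            rw [rootIter hroot n k]
        _ = (π (n+k) * (Q (n+k)).1)^(p^k) := by rw [mul_pow]
        _ = t (n+k) ^ p^k := by rw [hQ]
        _ = t n := rootIter ht1 n k
    have e : π n * qt n - t n = π n * (qt n - (Q (n+k)).1 ^ p^k) := by
      rw [mul_sub, h1]
    rw [e]
    exact Dvd.dvd.mul_left (hqt n k) _
  have hqroot : ∀ n, (qt (n+1))^p = qt n := by
    intro n
    refine eqA hc fun k => ?_
    have h1 : ϖ^k ∣ (qt (n+1))^p - ((Q (n+1+k)).1 ^ p^k)^p :=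
      dvd_trans (hqt (n+1) k) (sub_dvd_pow_sub_pow _ _ p)
    have e : ((Q (n+1+k)).1 ^ p^k)^p = (Q (n+(k+1))).1 ^ p^(k+1) := by
      rw [← pow_mul, ← pow_succ, show n+1+k = n+(k+1) from by omega]
    rw [e] at h1
    have h2 : ϖ^k ∣ qt n - (Q (n+(k+1))).1 ^ p^(k+1) :=
      dvd_trans (pow_dvd_pow ϖ (by omega)) (hqt n (k+1))
    have := dvd_sub h1 h2
    rwa [sub_sub_sub_cancel_right] at this
  refine ⟨(⟨fun n => Ideal.Quotient.mk (Ideal.span {(p:A)}) (qt n), fun n => ?_⟩ :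
    Perfection (A ⧸ Ideal.span {(p : A)}) p), ?_⟩
  · show (Ideal.Quotient.mk (Ideal.span {(p:A)}) (qt (n+1)))^p = _
    rw [← map_pow, hqroot]
  · refine Perfection.ext fun n => ?_
    erw [map_mul]
    rw [Perfection.coeff_mk, ← hπmk n, ← map_mul, hπq, ht2]

end Div

section Ker
variable {p : ℕ} [Fact p.Prime] {R : Type} [CommRing R] [CharP R p]

theorem pthRoot_pow (f : Perfection R p) : (Perfection.pthRoot R p f)^p = f := by
  refine Perfection.ext fun n => ?_
  rw [map_pow]
  exact Perfection.coeff_pow_p' f n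

theorem iterRoot_pow (f : Perfection R p) (n : ℕ) :
    ((Perfection.pthRoot R p)^[n] f)^(p^n) = f := by
  induction n generalizing f with
  | zero => simp
  | succ n ih =>
    rw [Function.iterate_succ_apply, pow_succ, pow_mul, ih, pthRoot_pow]

theorem coeff_iterRoot (f : Perfection R p) (n : ℕ) :
    Perfection.coeff R p 0 ((Perfection.pthRoot R p)^[n] f) = Perfection.coeff R p n f := by
  induction n generalizing f with
  | zero => rfl
  | succ n ih =>
    rw [Function.iterate_succ_apply, ih]
    rfl

end Ker

section Ker2
variable {p : ℕ} [Fact p.Prime] {A : Type} [CommRing A] {ϖ : A}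
  [CharP (A ⧸ Ideal.span {(p : A)}) p]

theorem kerPow (hA : IsPerfectoid p A ϖ)
    (ϖb : Perfection (A ⧸ Ideal.span {(p : A)}) p) (π : ℕ → A) (u' : Aˣ)
    (hroot : ∀ n, π (n+1)^p = π n) (hπ0 : π 0 = ϖ * u')
    (hπmk : ∀ n, Ideal.Quotient.mk (Ideal.span {(p:A)}) (π n) =
      Perfection.coeff (A ⧸ Ideal.span {(p : A)}) p n ϖb)
    (x : Perfection (A ⧸ Ideal.span {(p : A)}) p) (n : ℕ) :
    ϖb ^ p ^ n ∣ x ↔ Ideal.Quotient.mk (Ideal.span {(p:A)}) ϖ ∣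
      Perfection.coeff (A ⧸ Ideal.span {(p : A)}) p n x := by
  constructor
  · rintro ⟨w, rfl⟩
    rw [map_mul, map_pow, ← hπmk n, ← map_pow, pi_dvd_pi π u' hroot hπ0 n, map_mul]
    exact Dvd.dvd.mul_right (Dvd.dvd.mul_right dvd_rfl _) _
  · intro h
    have h0 : Ideal.Quotient.mk (Ideal.span {(p:A)}) ϖ ∣
        Perfection.coeff (A ⧸ Ideal.span {(p : A)}) p 0
          ((Perfection.pthRoot (A ⧸ Ideal.span {(p : A)}) p)^[n] x) := by
      rw [coeff_iterRoot]; exact h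
    obtain ⟨w, hw⟩ := tiltDvd hA ϖb π u' hroot hπ0 hπmk _ h0
    refine ⟨w^(p^n), ?_⟩
    calc x = ((Perfection.pthRoot (A ⧸ Ideal.span {(p : A)}) p)^[n] x)^(p^n) :=
          (iterRoot_pow x n).symm
      _ = (ϖb*w)^(p^n) := by rw [← hw]
      _ = ϖb^(p^n) * w^(p^n) := mul_pow _ _ _

end Ker2

theorem tilt_is_adic_complete
    (p : ℕ) [Fact p.Prime] (A : Type) [CommRing A] (ϖ : A)
    [CharP (A ⧸ Ideal.span {(p : A)}) p]
    (hA : IsPerfectoid p A ϖ)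
    (ϖb : Perfection (A ⧸ Ideal.span {(p : A)}) p)
    (hϖb : IsTilt p A ϖ ϖb) :
    IsAdicComplete (Ideal.span {ϖb}) (Perfection (A ⧸ Ideal.span {(p : A)}) p) := by
  obtain ⟨u, hu⟩ := hϖb
  have hp : p.Prime := Fact.out
  have hc := hA.complete
  have hd := hA.pow_dvd
  obtain ⟨π, hπroot, hπmk⟩ := sharpSystem hc hd ϖb
  obtain ⟨cc, hcc⟩ := hA.pow_dvd
  -- construct the unit u'
  have hps : (p:A) ∣ π 0 - (u:A)*ϖ := by
    have h1 : Ideal.Quotient.mk (Ideal.span {(p:A)}) (π 0) =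
        Ideal.Quotient.mk (Ideal.span {(p:A)}) ((u:A) * ϖ) := by rw [hπmk 0, hu]
    rw [Ideal.Quotient.eq] at h1
    rwa [Ideal.mem_span_singleton] at h1
  obtain ⟨s, hs⟩ := hps
  have hπ0' : π 0 = ϖ * ((u:A) + ϖ^(p-1) * (cc * s)) := by
    have h1 : π 0 = (u:A)*ϖ + (p:A)*s := by linear_combination hs
    have h2 : ϖ^p = ϖ * ϖ^(p-1) := by
      rw [← pow_succ', show p-1+1 = p from by have := hp.two_le; omega]
    rw [h1, hcc, h2]; ring
  have hunit : IsUnit ((u:A) + ϖ^(p-1)*(cc*s)) := by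
    haveI : IsAdicComplete (Ideal.span {ϖ}) A := hc
    have hj : Ideal.span {ϖ} ≤ (⊥:Ideal A).jacobson :=
      IsAdicComplete.le_jacobson_bot (Ideal.span {ϖ})
    have hw : (↑u⁻¹ * (ϖ^(p-1)*(cc*s)) : A) ∈ Ideal.span {ϖ} := by
      rw [Ideal.mem_span_singleton]
      refine Dvd.dvd.mul_left ?_ _
      exact Dvd.dvd.mul_right (dvd_pow_self ϖ (by have := hp.two_le; omega)) _
    have h1 : IsUnit (1 + (↑u⁻¹ * (ϖ^(p-1)*(cc*s)) : A)) := by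
      have h2 := hj hw
      rw [Ideal.mem_jacobson_bot] at h2
      have h3 := h2 1
      rwa [mul_one, add_comm] at h3
    have h4 : (u:A) + ϖ^(p-1)*(cc*s) = (u:A) * (1 + ↑u⁻¹*(ϖ^(p-1)*(cc*s))) := by
      rw [mul_add, mul_one, Units.mul_inv_cancel_left]
    rw [h4]
    exact u.isUnit.mul h1
  obtain ⟨u', hu'⟩ := hunit
  have hπ0 : π 0 = ϖ * ↑u' := by rw [hπ0', hu']
  have hIpow : ∀ m, ((Ideal.span {ϖb})^m • ⊤ :
      Submodule (Perfection (A ⧸ Ideal.span {(p : A)}) p)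
        (Perfection (A ⧸ Ideal.span {(p : A)}) p)) = Ideal.span {ϖb^m} := fun m => by
    rw [smul_eq_mul, Ideal.mul_top, Ideal.span_singleton_pow]
  refine { toIsHausdorff := ⟨?_⟩, toIsPrecomplete := ⟨?_⟩ }
  · -- Hausdorff
    intro x hx
    have hdvd : ∀ n, Ideal.Quotient.mk (Ideal.span {(p:A)}) ϖ ∣
        Perfection.coeff (A ⧸ Ideal.span {(p : A)}) p n x := by
      intro n
      have h1 := hx (p^n)
      rw [SModEq.zero, hIpow, Ideal.mem_span_singleton] at h1
      exact (kerPow hA ϖb π u' hπroot hπ0 hπmk x n).mp h1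
    obtain ⟨t, ht1, ht2⟩ := sharpSystem hc hd x
    have hϖt : ∀ k, ϖ ∣ t k := fun k => liftDvd hd (by rw [ht2 k]; exact hdvd k)
    have ht0 : ∀ n, t n = 0 := by
      intro n
      refine hausA hc fun m => ?_
      have hT : t (n+m) ^ p^m = t n := rootIter ht1 n m
      obtain ⟨z, hz⟩ := hϖt (n+m)
      have h2 : t n = ϖ^(p^m) * z^(p^m) := by rw [← mul_pow, ← hz, hT]
      exact dvd_trans (pow_dvd_pow ϖ (le_of_lt (Nat.lt_pow_self (n := m) hp.one_lt)))
        ⟨z^(p^m), h2⟩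
    refine Perfection.ext fun n => ?_
    rw [← ht2 n, ht0 n, map_zero, map_zero]
  · -- Precomplete
    intro f hf
    have hfd : ∀ m n : ℕ, m ≤ n → ϖb^m ∣ f n - f m := by
      intro m n h
      have h1 := hf h
      rw [SModEq.sub_mem, hIpow, Ideal.mem_span_singleton] at h1
      have h2 := dvd_neg.mpr h1
      rwa [neg_sub] at h2
    have hT0 := fun m => sharpSystem hc hd (f (p^m))
    choose T hTroot hTmk using hT0
    have cmp : ∀ j k m m' : ℕ, j + k ≤ m → m ≤ m' → ϖ^(k+1) ∣ T m' j - T m j := by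
      intro j k m m' hjk hmm
      have base : ϖ ∣ T m' (j+k) - T m (j+k) := by
        refine liftDvd hd ?_
        rw [map_sub, hTmk, hTmk]
        obtain ⟨w, hw⟩ := hfd (p^m) (p^m') (Nat.pow_le_pow_right hp.pos hmm)
        have h3 : Perfection.coeff (A ⧸ Ideal.span {(p : A)}) p (j+k) (f (p^m')) -
            Perfection.coeff (A ⧸ Ideal.span {(p : A)}) p (j+k) (f (p^m)) =
            Perfection.coeff (A ⧸ Ideal.span {(p : A)}) p (j+k) (ϖb^(p^m) * w) := by
          rw [← map_sub, hw]
        rw [h3, map_mul, map_pow, ← hπmk (j+k)]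
        have h2 : ϖ ∣ π (j+k)^(p^m) := by
          have h5 : π (j+k)^(p^m) = (π (j+k)^(p^(j+k)))^(p^(m - (j+k))) := by
            rw [← pow_mul, ← pow_add, show j+k+(m-(j+k)) = m from by omega]
          rw [h5, pi_dvd_pi π u' hπroot hπ0 (j+k), mul_pow]
          exact Dvd.dvd.mul_right
            (dvd_pow_self ϖ (Nat.pow_pos hp.pos).ne') _
        obtain ⟨cq, hcq⟩ := h2
        refine Dvd.dvd.mul_right ⟨Ideal.Quotient.mk _ cq, ?_⟩ _
        rw [← map_pow, hcq, map_mul]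
      have h6 : ϖ^(0+1) ∣ T m' (j+k) - T m (j+k) := by simpa using base
      have h7 := powGain hp hd h6 k
      rw [rootIter (hTroot m') j k, rootIter (hTroot m) j k] at h7
      rwa [show 0+1+k = k+1 from by omega] at h7
    have hYex : ∀ j, ∃ L, ∀ k, ϖ^k ∣ L - T (j+k) j := by
      intro j
      refine limA hc (fun k => T (j+k) j) (fun k => ?_)
      have := cmp j k (j+k) (j+(k+1)) (le_refl _) (by omega)
      have e : j+(k+1) = j+k+1 := by omega
      rw [e] at this
      exact this
    choose Y hY using hYex
    have hYroot : ∀ j, Y (j+1) ^ p = Y j := by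
      intro j
      refine eqA hc fun k => ?_
      have h1 : ϖ^k ∣ Y (j+1)^p - (T (j+1+k) (j+1))^p :=
        dvd_trans (hY (j+1) k) (sub_dvd_pow_sub_pow _ _ p)
      rw [hTroot (j+1+k) j] at h1
      have h2 : ϖ^k ∣ Y j - T (j+1+k) j := by
        have h3 := hY j (k+1)
        rw [show j+(k+1) = j+1+k from by omega] at h3
        exact dvd_trans (pow_dvd_pow ϖ (by omega)) h3
      have h4 := dvd_sub h1 h2
      rwa [sub_sub_sub_cancel_right] at h4
    have hymem : ∀ j, (Ideal.Quotient.mk (Ideal.span {(p:A)}) (Y (j+1)))^p =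
        Ideal.Quotient.mk (Ideal.span {(p:A)}) (Y j) := fun j => by rw [← map_pow, hYroot]
    let y : Perfection (A ⧸ Ideal.span {(p : A)}) p :=
      ⟨fun j => Ideal.Quotient.mk (Ideal.span {(p:A)}) (Y j), hymem⟩
    refine ⟨y, fun n => ?_⟩
    rw [SModEq.sub_mem, hIpow, Ideal.mem_span_singleton]
    have hyn : ϖb^(p^n) ∣ y - f (p^n) := by
        rw [kerPow hA ϖb π u' hπroot hπ0 hπmk _ n]
        rw [map_sub]
        have hYc : Perfection.coeff (A ⧸ Ideal.span {(p : A)}) p n y =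
            Ideal.Quotient.mk (Ideal.span {(p:A)}) (Y n) := rfl
        rw [hYc, ← hTmk n n, ← map_sub]
        have h1 : ϖ ∣ Y n - T (n+1) n := by
          have h0 := hY n 1
          rw [pow_one] at h0
          exact h0
        have h2 : ϖ ∣ T (n+1) n - T n n := by
          have := cmp n 0 n (n+1) (by omega) (by omega)
          simpa using this
        have h3 := dvd_add h1 h2
        rw [sub_add_sub_cancel] at h3
        obtain ⟨cq, hcq⟩ := h3
        exact ⟨Ideal.Quotient.mk _ cq, by rw [hcq, map_mul]⟩
    have hle : n ≤ p^n := le_of_lt (Nat.lt_pow_self (n := n) hp.one_lt)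
    have h3 : ϖb^n ∣ y - f (p^n) := dvd_trans (pow_dvd_pow ϖb hle) hyn
    have h4 : ϖb^n ∣ f (p^n) - f n := hfd n (p^n) hle
    have h5 := dvd_add h3 h4
    rw [sub_add_sub_cancel] at h5
    have h6 := dvd_neg.mpr h5
    rwa [neg_sub] at h6
end

section
/- Let p be a prime and let (A, ϖ) be a perfectoid ring. Then there exist a unit v ∈ A× and an element π ∈ A such that π^p = v·p and A is π-adically complete; consequently the localizations A[1/π] and A[1/p] coincide (the canonical map between them is an isomorphism). -/
section Helpers

variable {A : Type} [CommRing A]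

lemma smod_iff_dvd (g x y : A) (n : ℕ) :
    x ≡ y [SMOD ((Ideal.span {g}) ^ n • ⊤ : Submodule A A)] ↔ g ^ n ∣ x - y := by
  rw [SModEq.sub_mem, Ideal.smul_eq_mul, Ideal.mul_top, Ideal.span_singleton_pow,
    Ideal.mem_span_singleton]

lemma prime_binomial {p : ℕ} (hp : p.Prime) (t w : A) :
    ∃ r, (t + w) ^ p = t ^ p + w ^ p + (p : A) * (w * r) := by
  have h := add_pow_prime_eq hp t w
  have hdvd : w ∣ ∑ k ∈ Finset.Ioo 0 p, t ^ k * w ^ (p - k) * ((p.choose k / p : ℕ) : A) := by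
    refine Finset.dvd_sum fun k hk => ?_
    rw [Finset.mem_Ioo] at hk
    exact ((dvd_pow_self w (Nat.sub_ne_zero_of_lt hk.2)).mul_left _).mul_right _
  obtain ⟨r, hr⟩ := hdvd
  exact ⟨t * ∑ k ∈ Finset.Ioo 0 p, t ^ (k - 1) * w ^ (p - k - 1) * ((p.choose k / p : ℕ) : A), by rw [h]; ring⟩

lemma isAdicComplete_of_dvd {ϖ π : A} (h : IsAdicComplete (Ideal.span {ϖ}) A) (hd : ϖ ∣ π) :
    IsAdicComplete (Ideal.span {π}) A := by
  have hdn : ∀ n : ℕ, ϖ ^ n ∣ π ^ n := fun n => pow_dvd_pow_of_dvd hd n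
  refine { toIsHausdorff := ⟨?_⟩, toIsPrecomplete := ⟨?_⟩ }
  · intro x hx
    refine h.toIsHausdorff.haus x fun n => ?_
    exact (smod_iff_dvd ϖ x 0 n).2 ((hdn n).trans ((smod_iff_dvd π x 0 n).1 (hx n)))
  · intro f hf
    have hinc : ∀ n : ℕ, ∃ t, f (n + 1) - f n = π ^ n * t := by
      intro n
      obtain ⟨c, hc⟩ := (smod_iff_dvd π (f n) (f (n + 1)) n).1 (hf (Nat.le_succ n))
      exact ⟨-c, by rw [mul_neg, ← hc]; ring⟩
    choose t ht using hinc
    set g : ℕ → ℕ → A := fun n N => ∑ k ∈ Finset.range N, π ^ k * t (n + k) with hg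
    have key : ∀ n N, π ^ n * g n N = f (n + N) - f n := by
      intro n N
      induction N with
      | zero => simp [hg]
      | succ N ih =>
        rw [hg] at ih ⊢
        simp only [Finset.sum_range_succ, mul_add]
        rw [ih]
        have := ht (n + N)
        have hpow : π ^ n * (π ^ N * t (n + N)) = π ^ (n + N) * t (n + N) := by
          rw [← mul_assoc, ← pow_add]
        rw [hpow, ← this]
        have : n + (N + 1) = (n + N) + 1 := rfl
        rw [this]
        ring
    have cauchy : ∀ n, ∃ s, ∀ N, g n N ≡ s [SMOD ((Ideal.span {ϖ}) ^ N • ⊤ : Submodule A A)] := by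
      intro n
      apply h.toIsPrecomplete.prec
      intro N M hNM
      rw [smod_iff_dvd]
      have hsub : g n N - g n M = -∑ k ∈ Finset.Ico N M, π ^ k * t (n + k) := by
        rw [hg]
        simp only
        rw [Finset.sum_Ico_eq_sub _ hNM]
        ring
      rw [hsub]
      refine dvd_neg.2 (Finset.dvd_sum fun k hk => ?_)
      rw [Finset.mem_Ico] at hk
      exact ((pow_dvd_pow ϖ hk.1).trans (hdn k)).mul_right _
    choose s hs using cauchy
    refine ⟨f 0 + s 0, fun n => ?_⟩
    rw [smod_iff_dvd]
    have hzero : f n - (f 0 + s 0) + π ^ n * s n = 0 := by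
      refine h.toIsHausdorff.haus _ fun N => ?_
      rw [smod_iff_dvd, sub_zero]
      have h1 : ϖ ^ (n + N) ∣ g 0 (n + N) - s 0 := (smod_iff_dvd ϖ _ _ _).1 (hs 0 (n + N))
      have h2 : ϖ ^ N ∣ g n N - s n := (smod_iff_dvd ϖ _ _ _).1 (hs n N)
      have e1 := key 0 (n + N)
      have e2 := key n N
      rw [pow_zero, one_mul, Nat.zero_add] at e1
      have hD : f n - (f 0 + s 0) + π ^ n * s n
          = (g 0 (n + N) - s 0) - π ^ n * (g n N - s n)
            - (g 0 (n + N) - (f (n + N) - f 0)) + (π ^ n * g n N - (f (n + N) - f n)) := by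
        ring
      rw [e1] at h1
      rw [hD, e1, e2]
      simp only [sub_self, sub_zero, add_zero]
      exact dvd_sub ((pow_dvd_pow ϖ (Nat.le_add_left N n)).trans h1) (h2.mul_left _)
    have hfin : f n - (f 0 + s 0) = -(π ^ n * s n) := by linear_combination hzero
    rw [hfin]
    exact dvd_neg.2 (dvd_mul_right _ _)

lemma unit_one_add {ϖ : A} (h : IsAdicComplete (Ideal.span {ϖ}) A) (x : A) :
    IsUnit (1 + ϖ * x) := by
  haveI := h
  have hj : ϖ ∈ Ideal.jacobson (⊥ : Ideal A) :=
    IsAdicComplete.le_jacobson_bot _ (Ideal.mem_span_singleton_self ϖ)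
  have := Ideal.mem_jacobson_bot.1 hj x
  rwa [add_comm] at this

end Helpers

theorem exists_p_power_root_uniformizer
    (p : ℕ) [Fact p.Prime] (A : Type) [CommRing A] (ϖ : A)
    (hA : IsPerfectoid p A ϖ) :
    ∃ (v : Aˣ) (π : A), π ^ p = (v : A) * (p : A) ∧
      IsAdicComplete (Ideal.span {π}) A ∧
      IsLocalization.Away π (Localization.Away (p : A)) := by
  have hp : p.Prime := Fact.out
  obtain ⟨a, ha⟩ := hA.pow_dvd
  -- the invariant for the approximating sequence
  set P : ℕ → A × A × A → Prop :=
    fun k x => x.1 ^ p = a * (1 + ϖ * x.2.1) + ϖ ^ (p * k + p) * x.2.2 with hPdef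
  have hbase : ∃ x, P 0 x := by
    obtain ⟨y, hy⟩ := hA.frobenius_surjective a
    obtain ⟨c, hc⟩ := Ideal.mem_span_singleton.1 hy
    refine ⟨(y, 0, -c), ?_⟩
    simp only [hPdef]
    rw [Nat.mul_zero, Nat.zero_add]
    linear_combination -hc
  have hstep : ∀ k x, P k x → ∃ y, P (k + 1) y ∧
      ϖ ^ (k + 1) ∣ y.1 - x.1 ∧ ϖ ^ (k + 1) ∣ y.2.1 - x.2.1 := by
    rintro k ⟨t, s, f⟩ hx
    simp only [hPdef] at hx
    obtain ⟨e, he⟩ := hA.frobenius_surjective (-f)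
    obtain ⟨gg, hgg⟩ := Ideal.mem_span_singleton.1 he
    obtain ⟨r, hr⟩ := prime_binomial hp t (ϖ ^ (k + 1) * e)
    refine ⟨(t + ϖ ^ (k + 1) * e, s + ϖ ^ (p + k) * (e * r), -gg), ?_, ?_, ?_⟩
    · simp only [hPdef]
      rw [hr, mul_pow, hx, ha]
      linear_combination (-(ϖ ^ (p * k + p))) * hgg
    · simp only
      rw [add_sub_cancel_left]
      exact Dvd.intro _ rfl
    · simp only
      rw [add_sub_cancel_left]
      exact ((pow_dvd_pow ϖ (by have := hp.pos; omega)).mul_right _)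
  -- build the sequence
  let seq : ∀ k : ℕ, {x : A × A × A // P k x} := fun k =>
    Nat.rec ⟨hbase.choose, hbase.choose_spec⟩
      (fun k ih => ⟨(hstep k ih.1 ih.2).choose, (hstep k ih.1 ih.2).choose_spec.1⟩) k
  have hseq : ∀ k, ϖ ^ (k + 1) ∣ ((seq (k + 1)).1.1 - (seq k).1.1) ∧
      ϖ ^ (k + 1) ∣ ((seq (k + 1)).1.2.1 - (seq k).1.2.1) :=
    fun k => (hstep k (seq k).1 (seq k).2).choose_spec.2
  have cau : ∀ (u : ℕ → A), (∀ k, ϖ ^ (k + 1) ∣ u (k + 1) - u k) →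
      ∀ m n, m ≤ n → ϖ ^ m ∣ u n - u m := by
    intro u hu m n hmn
    induction n, hmn using Nat.le_induction with
    | base => simp
    | succ n hmn ih =>
      have hsplit : u (n + 1) - u m = (u (n + 1) - u n) + (u n - u m) := by ring
      rw [hsplit]
      exact dvd_add ((pow_dvd_pow ϖ (by omega)).trans (hu n)) ih
  set T : ℕ → A := fun k => (seq k).1.1 with hT
  set S : ℕ → A := fun k => (seq k).1.2.1 with hS
  have hTc := cau T (fun k => (hseq k).1)
  have hSc := cau S (fun k => (hseq k).2)
  obtain ⟨tl, htl⟩ := hA.complete.toIsPrecomplete.prec (f := T)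
    (fun {m n} hmn => (smod_iff_dvd ϖ _ _ _).2 ((dvd_sub_comm).1 (hTc m n hmn)))
  obtain ⟨sl, hsl⟩ := hA.complete.toIsPrecomplete.prec (f := S)
    (fun {m n} hmn => (smod_iff_dvd ϖ _ _ _).2 ((dvd_sub_comm).1 (hSc m n hmn)))
  have hkey : tl ^ p = a * (1 + ϖ * sl) := by
    rw [← sub_eq_zero]
    refine hA.complete.toIsHausdorff.haus _ fun N => ?_
    rw [smod_iff_dvd, sub_zero]
    have h1 : ϖ ^ N ∣ T N - tl := (smod_iff_dvd ϖ _ _ _).1 (htl N)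
    have h2 : ϖ ^ N ∣ S N - sl := (smod_iff_dvd ϖ _ _ _).1 (hsl N)
    have h3 : T N ^ p = a * (1 + ϖ * S N) + ϖ ^ (p * N + p) * (seq N).1.2.2 := (seq N).2
    have h4 : ϖ ^ N ∣ tl ^ p - T N ^ p :=
      (dvd_sub_comm.1 h1).trans (sub_dvd_pow_sub_pow tl (T N) p)
    have h5 : ϖ ^ N ∣ ϖ ^ (p * N + p) := pow_dvd_pow ϖ (by have := hp.pos; nlinarith)
    have hde : tl ^ p - a * (1 + ϖ * sl)
        = (tl ^ p - T N ^ p)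
          + (T N ^ p - (a * (1 + ϖ * S N) + ϖ ^ (p * N + p) * (seq N).1.2.2))
          + ϖ ^ (p * N + p) * (seq N).1.2.2 + a * ϖ * (S N - sl) := by ring
    rw [hde]
    refine dvd_add (dvd_add (dvd_add h4 ?_) (h5.mul_right _)) (h2.mul_left _)
    rw [h3, sub_self]
    exact dvd_zero _
  have hu := unit_one_add hA.complete sl
  have hπ : (ϖ * tl) ^ p = (1 + ϖ * sl) * (p : A) := by
    rw [mul_pow, hkey, ha]; ring
  refine ⟨hu.unit, ϖ * tl, ?_, isAdicComplete_of_dvd hA.complete (dvd_mul_right ϖ tl), ?_⟩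
  · rw [hu.unit_spec, hπ]
  · -- localization statement
    set π := ϖ * tl with hπdef
    set L := Localization.Away (p : A) with hL
    have hpow : ∀ n : ℕ, π ^ (p * n) = (1 + ϖ * sl) ^ n * (p : A) ^ n := by
      intro n
      rw [pow_mul, hπ, mul_pow]
    have hunitmap : IsUnit (algebraMap A L π) := by
      have h1 : IsUnit (algebraMap A L (p : A)) :=
        IsLocalization.Away.algebraMap_isUnit (p : A)
      have h2 : IsUnit (algebraMap A L (1 + ϖ * sl)) := hu.map _
      have h3 : IsUnit ((algebraMap A L π) ^ p) := by
        rw [← map_pow, hπ, map_mul]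
        exact h2.mul h1
      exact (isUnit_pow_iff hp.ne_zero).1 h3
    refine { map_units := ?_, surj := ?_, exists_of_eq := ?_ }
    · rintro ⟨y, hy⟩
      obtain ⟨n, rfl⟩ := hy
      simpa only [map_pow] using hunitmap.pow n
    · intro z
      obtain ⟨⟨x, m⟩, hx⟩ := IsLocalization.surj (M := Submonoid.powers (p : A)) z
      obtain ⟨n, hn⟩ := m.2
      have hn' : (p : A) ^ n = ↑m := hn
      refine ⟨⟨(1 + ϖ * sl) ^ n * x, ⟨π ^ (p * n), ⟨p * n, rfl⟩⟩⟩, ?_⟩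
      have : π ^ (p * n) = (1 + ϖ * sl) ^ n * (m : A) := by rw [hpow, hn']
      simp only at hx ⊢
      rw [this, map_mul, map_mul, ← hx]
      ring
    · intro x y hxy
      obtain ⟨c, hc⟩ := IsLocalization.exists_of_eq (M := Submonoid.powers (p : A)) hxy
      obtain ⟨n, hn⟩ := c.2
      have hn' : (p : A) ^ n = ↑c := hn
      refine ⟨⟨π ^ (p * n), ⟨p * n, rfl⟩⟩, ?_⟩
      have hcc : π ^ (p * n) = (1 + ϖ * sl) ^ n * (c : A) := by rw [hpow, hn']
      simp only
      rw [hcc, mul_assoc, mul_assoc, hc]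
end

section
/- Let V be a valuation ring whose fraction field is algebraically closed. Then V is a henselian local ring and its residue field is algebraically closed (in particular V is strictly henselian). -/
open Polynomial

-- V is integrally closed
lemma vr_integers (V : Type) [CommRing V] [IsDomain V] [ValuationRing V] :
    (ValuationRing.valuation V (FractionRing V)).Integers V where
  hom_inj := IsFractionRing.injective _ _
  map_le_one x := (ValuationRing.mem_integer_iff V _ _).mpr ⟨x, rfl⟩
  exists_of_le_one r hr := (ValuationRing.mem_integer_iff V _ _).mp hr

lemma vr_icl (V : Type) [CommRing V] [IsDomain V] [ValuationRing V] :
    IsIntegrallyClosed V := (vr_integers V).isIntegrallyClosed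

-- every monic polynomial over V splits into linear factors
lemma vr_factor (V : Type) [CommRing V] [IsDomain V] [ValuationRing V]
    (halg : IsAlgClosed (FractionRing V)) (f : V[X]) (hf : f.Monic) :
    ∃ s : Multiset V, f = (s.map fun r => X - C r).prod := by
  have : IsIntegrallyClosed V := vr_icl V
  set K := FractionRing V
  set φ := algebraMap V K
  have hinj : Function.Injective φ := IsFractionRing.injective _ _
  have hsp : (f.map φ).Splits := IsAlgClosed.splits _
  have hroots : ∀ x ∈ (f.map φ).roots, ∃ r : V, φ r = x := by
    intro x hx
    have hint : IsIntegral V x := by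
      refine ⟨f, hf, ?_⟩
      have := (mem_roots (hf.map φ).ne_zero).mp hx
      rwa [← Polynomial.eval_map]
    exact IsIntegrallyClosed.isIntegral_iff.mp hint
  choose g hg using hroots
  refine ⟨((f.map φ).roots).attach.map fun x => g x.1 x.2, ?_⟩
  apply Polynomial.map_injective φ hinj
  conv_lhs => rw [hsp.eq_prod_roots_of_monic (hf.map φ)]
  rw [Polynomial.map_multiset_prod]
  congr 1
  rw [Multiset.map_map, Multiset.map_map]
  conv_lhs => rw [← Multiset.attach_map_val (f.map φ).roots, Multiset.map_map]
  apply Multiset.map_congr rfl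
  intro x _
  simp [hg x.1 x.2]

theorem valuation_ring_with_alg_closed_fraction_field_is_strictly_henselian
    (V : Type) [CommRing V] [IsDomain V] [ValuationRing V]
    (halg : IsAlgClosed (FractionRing V)) :
    HenselianLocalRing V ∧ IsAlgClosed (IsLocalRing.ResidueField V) := by
  constructor
  · refine ⟨fun f hf a₀ h₀ _ => ?_⟩
    obtain ⟨s, rfl⟩ := vr_factor V halg f hf
    rw [Polynomial.eval_multiset_prod] at h₀
    have hprime : (IsLocalRing.maximalIdeal V).IsPrime := inferInstance
    rw [Multiset.map_map] at h₀
    obtain ⟨y, hy, hym⟩ := (hprime.multiset_prod_mem_iff_exists_mem _).mp h₀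
    obtain ⟨r, hr, rfl⟩ := Multiset.mem_map.mp hy
    refine ⟨r, ?_, ?_⟩
    · rw [IsRoot, Polynomial.eval_multiset_prod]
      apply Multiset.prod_eq_zero
      rw [Multiset.map_map]
      refine Multiset.mem_map.mpr ⟨r, hr, ?_⟩
      simp
    · rw [show r - a₀ = -(a₀ - r) by ring]
      exact (IsLocalRing.maximalIdeal V).neg_mem (by simpa using hym)
  · apply IsAlgClosed.of_exists_root
    intro p hmon hirr
    have hsurj : Function.Surjective (IsLocalRing.residue V) := Ideal.Quotient.mk_surjective
    have hlift : p ∈ Polynomial.lifts (IsLocalRing.residue V) :=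
      (Polynomial.lifts_iff_coeff_lifts p).mpr fun n => hsurj _
    obtain ⟨q, hq, hdeg, hqmon⟩ := Polynomial.lifts_and_degree_eq_and_monic hlift hmon
    obtain ⟨s, hs⟩ := vr_factor V halg q hqmon
    have hsne : s ≠ 0 := by
      rintro rfl
      rw [hs] at hdeg
      simp at hdeg
      have : p = 1 := hmon.degree_le_zero_iff_eq_one.mp (le_of_eq hdeg.symm)
      exact hirr.not_isUnit (this ▸ isUnit_one)
    obtain ⟨r, hr⟩ := Multiset.exists_mem_of_ne_zero hsne
    refine ⟨IsLocalRing.residue V r, ?_⟩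
    have hq0 : q.eval r = 0 := by
      rw [hs, Polynomial.eval_multiset_prod]
      apply Multiset.prod_eq_zero
      rw [Multiset.map_map]
      exact Multiset.mem_map.mpr ⟨r, hr, by simp⟩
    rw [← hq, Polynomial.eval_map, Polynomial.eval₂_at_apply, hq0, map_zero]
end

section
/- Let V be a valuation ring whose fraction field is algebraically closed, and let 𝔭 ⊆ V be a prime ideal. Then: (a) the quotient V/𝔭 is a valuation ring whose fraction field is algebraically closed; (b) the localization V_𝔭 of V at 𝔭 is a valuation ring whose fraction field is algebraically closed; and (c) the residue field κ(𝔭) of V at 𝔭 (the residue field of the local ring V_𝔭) is algebraically closed. -/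
/-- The residue field of a local valuation domain with algebraically closed
fraction field is algebraically closed. -/
theorem aux_residue_alg_closed (R : Type) [CommRing R] [IsDomain R] [ValuationRing R]
    (K : Type) [Field K] [Algebra R K] [IsFractionRing R K] [IsAlgClosed K] :
    IsAlgClosed (IsLocalRing.ResidueField R) := by
  apply IsAlgClosed.of_exists_root
  intro p hm hirr
  have hl : p ∈ Polynomial.lifts (IsLocalRing.residue R) := by
    rw [Polynomial.lifts_iff_coeff_lifts]
    exact fun n => IsLocalRing.residue_surjective _
  obtain ⟨q, hq, hdeg, hqm⟩ := Polynomial.lifts_and_degree_eq_and_monic hl hm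
  have hinj : Function.Injective (algebraMap R K) := IsFractionRing.injective R K
  have hdeg' : (q.map (algebraMap R K)).degree ≠ 0 := by
    rw [Polynomial.degree_map_eq_of_injective hinj, hdeg]
    exact (Polynomial.degree_pos_of_irreducible hirr).ne'
  obtain ⟨z, hz⟩ := IsAlgClosed.exists_root _ hdeg'
  have hint : IsIntegral R z := ⟨q, hqm, by rwa [Polynomial.eval₂_eq_eval_map]⟩
  obtain ⟨y, rfl⟩ := IsIntegrallyClosed.isIntegral_iff.mp hint
  have hy : q.eval y = 0 := by
    apply hinj
    rw [map_zero, ← Polynomial.eval₂_hom, ← Polynomial.eval_map]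
    exact hz
  refine ⟨IsLocalRing.residue R y, ?_⟩
  rw [← hq, Polynomial.eval_map, Polynomial.eval₂_hom, hy, map_zero]

/-- The localization of a valuation domain at a prime is a valuation ring. -/
theorem aux_valuationRing_localization (V : Type) [CommRing V] [IsDomain V] [ValuationRing V]
    (𝔭 : Ideal V) [𝔭.IsPrime] : ValuationRing (Localization.AtPrime 𝔭) := by
  rw [ValuationRing.iff_isInteger_or_isInteger _ (FractionRing V)]
  intro x
  rcases ValuationRing.isInteger_or_isInteger V x with ⟨r, hr⟩ | ⟨r, hr⟩
  · exact Or.inl ⟨algebraMap V _ r, by rw [← IsScalarTower.algebraMap_apply, hr]⟩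
  · exact Or.inr ⟨algebraMap V _ r, by rw [← IsScalarTower.algebraMap_apply, hr]⟩

/-- A commutative ring is a valuation ring whose fraction field is algebraically
closed. -/
structure IsAlgClosedValuationRing (V : Type) [CommRing V] : Prop where
  [isDomain : IsDomain V]
  [valuationRing : ValuationRing V]
  algClosedFractionField : IsAlgClosed (FractionRing V)

theorem quotient_localization_residue_of_valuation_ring_alg_closed
    (V : Type) [CommRing V] [IsDomain V] [ValuationRing V]
    (halg : IsAlgClosed (FractionRing V)) (𝔭 : Ideal V) [𝔭.IsPrime] :
    IsAlgClosedValuationRing (V ⧸ 𝔭) ∧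
    IsAlgClosedValuationRing (Localization.AtPrime 𝔭) ∧
    IsAlgClosed (IsLocalRing.ResidueField (Localization.AtPrime 𝔭)) := by
  haveI := halg
  haveI hvq : ValuationRing (V ⧸ 𝔭) :=
    Function.Surjective.valuationRing (Ideal.Quotient.mk 𝔭) Ideal.Quotient.mk_surjective
  haveI hvl : ValuationRing (Localization.AtPrime 𝔭) := aux_valuationRing_localization V 𝔭
  -- the fraction field of the localization is algebraically closed
  haveI hFl : IsAlgClosed (FractionRing (Localization.AtPrime 𝔭)) :=
    IsAlgClosed.of_ringEquiv (FractionRing V) _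
      (letI : Algebra (Localization.AtPrime 𝔭) (FractionRing (Localization.AtPrime 𝔭)) :=
         OreLocalization.instAlgebra
       (FractionRing.algEquiv (Localization.AtPrime 𝔭) (FractionRing V)).symm.toRingEquiv)
  -- the residue field of the localization is algebraically closed
  haveI hres : IsAlgClosed (IsLocalRing.ResidueField (Localization.AtPrime 𝔭)) :=
    aux_residue_alg_closed (Localization.AtPrime 𝔭) (FractionRing V)
  -- the residue field κ(𝔭) is a fraction field of V ⧸ 𝔭
  set κ := IsLocalRing.ResidueField (Localization.AtPrime 𝔭) with hκ
  set f : V →+* κ :=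
    (IsLocalRing.residue (Localization.AtPrime 𝔭)).comp
      (algebraMap V (Localization.AtPrime 𝔭)) with hf
  have hfz : ∀ a ∈ 𝔭, f a = 0 := by
    intro a ha
    have : algebraMap V (Localization.AtPrime 𝔭) a ∈
        IsLocalRing.maximalIdeal (Localization.AtPrime 𝔭) :=
      (IsLocalization.AtPrime.to_map_mem_maximal_iff _ 𝔭 a).mpr ha
    exact (IsLocalRing.residue_eq_zero_iff _).mpr this
  set φ : V ⧸ 𝔭 →+* κ := Ideal.Quotient.lift 𝔭 f hfz with hφ
  have hφinj : Function.Injective φ := by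
    rw [RingHom.injective_iff_ker_eq_bot, eq_bot_iff]
    rintro x hx
    obtain ⟨a, rfl⟩ := Ideal.Quotient.mk_surjective x
    rw [RingHom.mem_ker, hφ, Ideal.Quotient.lift_mk, hf, RingHom.comp_apply] at hx
    have : algebraMap V (Localization.AtPrime 𝔭) a ∈
        IsLocalRing.maximalIdeal (Localization.AtPrime 𝔭) :=
      Ideal.Quotient.eq_zero_iff_mem.mp hx
    have ha : a ∈ 𝔭 := (IsLocalization.AtPrime.to_map_mem_maximal_iff _ 𝔭 a).mp this
    simpa using Ideal.Quotient.eq_zero_iff_mem.mpr ha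
  letI : Algebra (V ⧸ 𝔭) κ := φ.toAlgebra
  have halgMap : (algebraMap (V ⧸ 𝔭) κ) = φ := rfl
  haveI : IsFractionRing (V ⧸ 𝔭) κ := by
    constructor
    constructor
    · rintro ⟨y, hy⟩
      have hy0 : y ≠ 0 := mem_nonZeroDivisors_iff_ne_zero.mp hy
      have : φ y ≠ 0 := fun h => hy0 (hφinj (by simpa using h))
      exact this.isUnit
    · intro z
      obtain ⟨w, rfl⟩ := IsLocalRing.residue_surjective (R := Localization.AtPrime 𝔭) z
      obtain ⟨⟨x, s⟩, rfl⟩ := IsLocalization.mk'_surjective 𝔭.primeCompl w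
      have hsne : (Ideal.Quotient.mk 𝔭) (s : V) ≠ 0 := by
        rw [Ne, Ideal.Quotient.eq_zero_iff_mem]
        exact s.2
      refine ⟨⟨Ideal.Quotient.mk 𝔭 x, ⟨Ideal.Quotient.mk 𝔭 (s : V),
        mem_nonZeroDivisors_iff_ne_zero.mpr hsne⟩⟩, ?_⟩
      show _ * φ _ = φ _
      rw [hφ, Ideal.Quotient.lift_mk, Ideal.Quotient.lift_mk, hf, RingHom.comp_apply,
        RingHom.comp_apply, ← map_mul, IsLocalization.mk'_spec]
    · intro x y h
      exact ⟨1, by rw [show x = y from hφinj (by simpa [halgMap] using h)]⟩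
  haveI hFq : IsAlgClosed (FractionRing (V ⧸ 𝔭)) :=
    IsAlgClosed.of_ringEquiv κ _ (FractionRing.algEquiv (V ⧸ 𝔭) κ).symm.toRingEquiv
  exact ⟨⟨hFq⟩, ⟨hFl⟩, hres⟩
end

section
/- Let R be a commutative ring with an element ϖ ∈ R having bounded ϖ-torsion, and let S be a flat R-algebra. Then S has bounded ϖ-torsion (for the image of ϖ), and the canonical map from S to its ϖ-adic completion Ŝ restricts to a bijection between the ϖ-power-torsion elements of S and the ϖ-power-torsion elements of Ŝ. -/
open TensorProduct

lemma aux_bounded (R : Type) [CommRing R] (ϖ : R) (n : ℕ)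
    (hbdd : ∀ x : R, (∃ m : ℕ, ϖ ^ m * x = 0) → ϖ ^ n * x = 0)
    (S : Type) [CommRing S] [Algebra R S] [Module.Flat R S]
    (x : S) (k : ℕ) (hx : (algebraMap R S ϖ) ^ k * x = 0) :
    (algebraMap R S ϖ) ^ n * x = 0 := by
  set f : R →ₗ[R] R := LinearMap.lsmul R R (ϖ ^ k) with hf
  have hexact : Function.Exact (LinearMap.ker f).subtype f :=
    f.exact_subtype_ker_map
  have hT : Function.Exact ((LinearMap.ker f).subtype.rTensor S) (f.rTensor S) :=
    Module.Flat.rTensor_exact S hexact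
  have hξ : f.rTensor S ((1 : R) ⊗ₜ[R] x) = 0 := by
    simp only [LinearMap.rTensor_tmul, hf, LinearMap.lsmul_apply, smul_eq_mul, mul_one]
    rw [show (ϖ ^ k) ⊗ₜ[R] x = (1 : R) ⊗ₜ[R] ((ϖ ^ k) • x) by
      rw [← smul_tmul, smul_eq_mul, mul_one]]
    rw [Algebra.smul_def, map_pow, hx, tmul_zero]
  obtain ⟨η, hη⟩ := (hT _).mp hξ
  set ψ : R ⊗[R] S →ₗ[R] S :=
    TensorProduct.lift ((LinearMap.lsmul R S).comp (LinearMap.lsmul R R (ϖ ^ n))) with hψ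
  have hcomp : ∀ η, ψ ((LinearMap.ker f).subtype.rTensor S η) = 0 := by
    intro η
    induction η using TensorProduct.induction_on with
    | zero => simp
    | tmul a s =>
        simp only [LinearMap.rTensor_tmul, Submodule.coe_subtype, hψ, lift.tmul,
          LinearMap.coe_comp, Function.comp_apply, LinearMap.lsmul_apply, smul_eq_mul]
        have h2 := a.2
        simp only [hf, LinearMap.mem_ker, LinearMap.lsmul_apply, smul_eq_mul] at h2
        have ha : ϖ ^ n * (a : R) = 0 := hbdd _ ⟨k, h2⟩
        rw [ha, zero_smul]
    | add a b ha hb => simp [map_add, ha, hb]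
  have : ψ ((1 : R) ⊗ₜ[R] x) = 0 := by rw [← hη, hcomp]
  simpa [hψ, smul_eq_mul, Algebra.smul_def, map_pow] using this

theorem flat_bounded_torsion_and_completion_torsion
    (R : Type) [CommRing R] (ϖ : R) (n : ℕ) (hn : 1 ≤ n)
    (hbdd : ∀ x : R, (∃ m : ℕ, ϖ ^ m * x = 0) → ϖ ^ n * x = 0)
    (S : Type) [CommRing S] [Algebra R S] [Module.Flat R S] :
    (∃ m : ℕ, 1 ≤ m ∧ ∀ x : S,
      (∃ k : ℕ, (algebraMap R S ϖ) ^ k * x = 0) → (algebraMap R S ϖ) ^ m * x = 0) ∧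
    Set.BijOn (algebraMap S (AdicCompletion (Ideal.span {algebraMap R S ϖ}) S))
      {x : S | ∃ k : ℕ, (algebraMap R S ϖ) ^ k * x = 0}
      {y : AdicCompletion (Ideal.span {algebraMap R S ϖ}) S |
        ∃ k : ℕ,
          (algebraMap S (AdicCompletion (Ideal.span {algebraMap R S ϖ}) S)
            (algebraMap R S ϖ)) ^ k * y = 0} := by
  set ϖS : S := algebraMap R S ϖ with hϖS
  set I : Ideal S := Ideal.span {ϖS} with hI
  have hA : ∀ x : S, (∃ k : ℕ, ϖS ^ k * x = 0) → ϖS ^ n * x = 0 := by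
    rintro x ⟨k, hk⟩
    exact aux_bounded R ϖ n hbdd S x k hk
  have hmem : ∀ (m : ℕ) (x : S), x ∈ (I ^ m • ⊤ : Ideal S) ↔ ∃ a, a * ϖS ^ m = x := by
    intro m x
    rw [smul_eq_mul, Ideal.mul_top, hI, Ideal.span_singleton_pow, Ideal.mem_span_singleton']
  have hval : ∀ (x : S) (m : ℕ),
      (algebraMap S (AdicCompletion I S) x).val m
        = Submodule.mkQ (I ^ m • ⊤ : Ideal S) x := fun _ _ => rfl
  -- projection compatibility: if mkQ at level m' is y.val m', then mkQ at lower level m is y.val m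
  have hproj : ∀ (y : AdicCompletion I S) {m m' : ℕ} (hmm' : m ≤ m') (s : S),
      Submodule.mkQ (I ^ m' • ⊤ : Ideal S) s = y.val m' →
      Submodule.mkQ (I ^ m • ⊤ : Ideal S) s = y.val m := by
    intro y m m' hmm' s hs
    have h3 := AdicCompletion.transitionMap_comp_eval_apply (I := I) (M := S) hmm' y
    rw [← hs] at h3
    rw [← h3]
    rfl
  refine ⟨⟨n, hn, hA⟩, ?_, ?_, ?_⟩
  · -- MapsTo
    rintro x ⟨k, hk⟩
    exact ⟨k, by rw [← map_pow, ← map_mul, hk, map_zero]⟩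
  · -- InjOn
    rintro x ⟨k, hk⟩ x' ⟨k', hk'⟩ heq
    have hd : ϖS ^ (k + k') * (x - x') = 0 := by
      have h1 : ϖS ^ (k + k') * x = 0 := by
        rw [pow_add, mul_comm (ϖS ^ k), mul_assoc, hk, mul_zero]
      have h2 : ϖS ^ (k + k') * x' = 0 := by
        rw [pow_add, mul_assoc, hk', mul_zero]
      rw [mul_sub, h1, h2, sub_zero]
    have hdn : ϖS ^ n * (x - x') = 0 := hA _ ⟨k + k', hd⟩
    have hvv : Submodule.mkQ (I ^ (2 * n) • ⊤ : Ideal S) x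
        = Submodule.mkQ (I ^ (2 * n) • ⊤ : Ideal S) x' := by
      rw [← hval x (2 * n), ← hval x' (2 * n), heq]
    have hq : Submodule.mkQ (I ^ (2 * n) • ⊤ : Ideal S) (x - x') = 0 := by
      rw [map_sub, hvv, sub_self]
    have hmemd : x - x' ∈ (I ^ (2 * n) • ⊤ : Ideal S) := by
      rwa [Submodule.mkQ_apply, Submodule.Quotient.mk_eq_zero] at hq
    obtain ⟨a, ha⟩ := (hmem (2 * n) (x - x')).mp hmemd
    have h6 : ϖS ^ (n + 2 * n) * a = 0 := by
      have heq2 : ϖS ^ (n + 2 * n) * a = ϖS ^ n * (a * ϖS ^ (2 * n)) := by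
        rw [pow_add]; ring
      rw [heq2, ha]; exact hdn
    have h7 : ϖS ^ n * a = 0 := hA a ⟨n + 2 * n, h6⟩
    have hz : x - x' = 0 := by
      rw [← ha]
      calc a * ϖS ^ (2 * n) = ϖS ^ n * a * ϖS ^ (2 * n - n) := by
            rw [mul_comm (ϖS ^ n) a, mul_assoc, ← pow_add,
              Nat.add_sub_cancel' (by omega : n ≤ 2 * n)]
        _ = 0 := by rw [h7, zero_mul]
    exact sub_eq_zero.mp hz
  · -- SurjOn
    rintro y ⟨k, hk⟩
    have h0 : (ϖS ^ k) • y = 0 := by rw [Algebra.smul_def, map_pow]; exact hk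
    have hky : ∀ m, (ϖS ^ k) • y.val m = 0 := by
      intro m
      rw [← AdicCompletion.val_smul_apply, h0, AdicCompletion.val_zero_apply]
    have hx : ∀ m : ℕ, ∃ x : S, ϖS ^ k * x = 0 ∧
        Submodule.mkQ (I ^ m • ⊤ : Ideal S) x = y.val m := by
      intro m
      obtain ⟨s, hs⟩ := Submodule.mkQ_surjective (I ^ (m + k) • ⊤ : Ideal S) (y.val (m + k))
      have h1 : Submodule.mkQ (I ^ (m + k) • ⊤ : Ideal S) (ϖS ^ k * s) = 0 := by
        rw [← smul_eq_mul, map_smul, hs, hky]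
      have h1' : ϖS ^ k * s ∈ (I ^ (m + k) • ⊤ : Ideal S) := by
        rwa [Submodule.mkQ_apply, Submodule.Quotient.mk_eq_zero] at h1
      obtain ⟨t, ht⟩ := (hmem (m + k) _).mp h1'
      refine ⟨s - ϖS ^ m * t, ?_, ?_⟩
      · rw [mul_sub, ← ht, pow_add]; ring
      · have h2 : Submodule.mkQ (I ^ m • ⊤ : Ideal S) (ϖS ^ m * t) = 0 := by
          rw [Submodule.mkQ_apply, Submodule.Quotient.mk_eq_zero]
          exact (hmem m _).mpr ⟨t, mul_comm t (ϖS ^ m)⟩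
        rw [map_sub, h2, sub_zero]
        exact hproj y (Nat.le_add_right m k) s hs
    choose X hX1 hX2 using hx
    have hstab : ∀ m m' : ℕ, n ≤ m → m ≤ m' → X m = X m' := by
      intro m m' hnm hmm'
      have hd : ϖS ^ k * (X m - X m') = 0 := by rw [mul_sub, hX1, hX1, sub_zero]
      have hdn : ϖS ^ n * (X m - X m') = 0 := hA _ ⟨k, hd⟩
      have h5 : Submodule.mkQ (I ^ m • ⊤ : Ideal S) (X m') = y.val m :=
        hproj y hmm' (X m') (hX2 m')
      have hq : Submodule.mkQ (I ^ m • ⊤ : Ideal S) (X m - X m') = 0 := by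
        rw [map_sub, hX2 m, h5, sub_self]
      have hmemd : X m - X m' ∈ (I ^ m • ⊤ : Ideal S) := by
        rwa [Submodule.mkQ_apply, Submodule.Quotient.mk_eq_zero] at hq
      obtain ⟨a, ha⟩ := (hmem m _).mp hmemd
      have h6 : ϖS ^ (n + m) * a = 0 := by
        have heq2 : ϖS ^ (n + m) * a = ϖS ^ n * (a * ϖS ^ m) := by rw [pow_add]; ring
        rw [heq2, ha]; exact hdn
      have h7 : ϖS ^ n * a = 0 := hA a ⟨n + m, h6⟩
      have hz : X m - X m' = 0 := by
        rw [← ha]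
        calc a * ϖS ^ m = ϖS ^ n * a * ϖS ^ (m - n) := by
              rw [mul_comm (ϖS ^ n) a, mul_assoc, ← pow_add, Nat.add_sub_cancel' hnm]
          _ = 0 := by rw [h7, zero_mul]
      exact sub_eq_zero.mp hz
    refine ⟨X n, ⟨k, hX1 n⟩, ?_⟩
    apply AdicCompletion.ext
    intro m
    rw [hval]
    have hXeq : X n = X (max m n) := hstab n (max m n) le_rfl (le_max_right m n)
    rw [hXeq]
    exact hproj y (le_max_left m n) (X (max m n)) (hX2 (max m n))
end

section
/- Let (V_i)_{i∈I} be a family of valuation rings, each having algebraically closed fraction field, and let R := ∏_{i∈I} V_i. Then R has no non-split étale covers: for every étale R-algebra B that is faithfully flat over R, there exists an R-algebra homomorphism B → R (an R-algebra retraction of R → B). -/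
open TensorProduct

set_option maxHeartbeats 2000000 in
theorem etale_section_of_valuation_ring
    (V : Type) [CommRing V] [IsDomain V] [ValuationRing V]
    [IsAlgClosed (FractionRing V)]
    (B : Type) [CommRing B] [Algebra V B]
    [Algebra.FormallyEtale V B] [Algebra.FiniteType V B] [Module.Flat V B]
    (hne : Ideal.map (algebraMap V B) (IsLocalRing.maximalIdeal V) ≠ ⊤) :
    Nonempty (B →ₐ[V] V) := by
  classical
  set K := FractionRing V with hK
  obtain ⟨q, hqmax, hq⟩ := Ideal.exists_le_maximal _ hne
  haveI := hqmax.isPrime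
  set Bq := Localization.AtPrime q with hBq
  haveI : Module.Flat V Bq := Module.Flat.trans V B Bq
  haveI : IsLocalRing Bq := Localization.AtPrime.isLocalRing q
  -- nonzero elements of V stay nonzero in Bq
  have hM0 : ∀ v : V, v ≠ 0 → algebraMap V Bq v ≠ 0 := by
    intro v hv h0
    have hinj : Function.Injective (LinearMap.lsmul V V v) := by
      intro a b hab
      simpa using mul_left_cancel₀ hv (by simpa using hab)
    have h2 := Module.Flat.lTensor_preserves_injective_linearMap
      (M := Bq) (LinearMap.lsmul V V v) hinj
    have e1 : (LinearMap.lsmul V V v).lTensor Bq ((1 : Bq) ⊗ₜ[V] (1 : V)) = 0 := by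
      have hsm : v • (1 : Bq) = 0 := by
        rw [← Algebra.algebraMap_eq_smul_one, h0]
      simp only [LinearMap.lTensor_tmul, LinearMap.lsmul_apply, smul_eq_mul, mul_one]
      rw [show (1 : Bq) ⊗ₜ[V] v = (1 : Bq) ⊗ₜ[V] (v • (1 : V)) by rw [smul_eq_mul, mul_one],
        ← TensorProduct.smul_tmul, hsm, TensorProduct.zero_tmul]
    have e2 : ((1 : Bq) ⊗ₜ[V] (1 : V)) = 0 := by
      apply h2; rw [e1, map_zero]
    refine one_ne_zero (α := Bq) ?_
    calc (1 : Bq) = (TensorProduct.rid V Bq) ((1 : Bq) ⊗ₜ[V] (1 : V)) := by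
          rw [TensorProduct.rid_tmul, one_smul]
      _ = (TensorProduct.rid V Bq) 0 := by rw [e2]
      _ = 0 := LinearEquiv.map_zero _
  -- localize Bq at the image of V ∖ {0}
  set M : Submonoid Bq := Algebra.algebraMapSubmonoid Bq (nonZeroDivisors V) with hM
  set C := Localization M with hC
  haveI : Nontrivial C := by
    refine OreLocalization.nontrivial_iff.mpr ?_
    rintro ⟨v, hv, hv0⟩
    exact hM0 v (nonZeroDivisors.ne_zero hv) hv0
  -- K-algebra structure on C
  have hunit : ∀ y : nonZeroDivisors V,
      IsUnit (((algebraMap Bq C).comp (algebraMap V Bq)) y) := by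
    intro y
    exact IsLocalization.map_units (M := M) C ⟨algebraMap V Bq y, ⟨y, y.2, rfl⟩⟩
  letI : Algebra K C := (IsLocalization.lift (S := K) hunit).toAlgebra
  haveI : IsScalarTower V K C := IsScalarTower.of_algebraMap_eq fun v => by
    rw [IsScalarTower.algebraMap_apply V Bq C]
    exact (IsLocalization.lift_eq hunit v).symm
  obtain ⟨n, hn⟩ := Ideal.exists_maximal C
  haveI := hn.isPrime
  set A := Localization.AtPrime n with hA
  haveI : IsLocalRing A := Localization.AtPrime.isLocalRing n
  haveI : IsScalarTower V K A := IsScalarTower.of_algebraMap_eq fun v => by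
    rw [IsScalarTower.algebraMap_apply V C A, IsScalarTower.algebraMap_apply V K C,
      ← IsScalarTower.algebraMap_apply K C A]
  -- unramifiedness and essential finiteness of A over K
  haveI : Algebra.FormallyUnramified V B := inferInstance
  haveI : Algebra.FormallyEtale B Bq :=
    Algebra.FormallyEtale.of_isLocalization (M := q.primeCompl) (Rₘ := Bq)
  haveI : Algebra.FormallyUnramified V Bq := Algebra.FormallyUnramified.comp V B Bq
  haveI : Algebra.FormallyEtale Bq C :=
    Algebra.FormallyEtale.of_isLocalization (M := M) (Rₘ := C)
  haveI : Algebra.FormallyUnramified V C := Algebra.FormallyUnramified.comp V Bq C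
  haveI : Algebra.FormallyEtale C A :=
    Algebra.FormallyEtale.of_isLocalization (M := n.primeCompl) (Rₘ := A)
  haveI : Algebra.FormallyUnramified V A := Algebra.FormallyUnramified.comp V C A
  haveI : Algebra.FormallyUnramified K A := Algebra.FormallyUnramified.of_restrictScalars V K A
  haveI : Algebra.EssFiniteType V B := Algebra.EssFiniteType.of_finiteType V B
  haveI : Algebra.EssFiniteType B Bq := Algebra.EssFiniteType.of_isLocalization _ q.primeCompl
  haveI : Algebra.EssFiniteType V Bq := Algebra.EssFiniteType.comp V B Bq
  haveI : Algebra.EssFiniteType Bq C := Algebra.EssFiniteType.of_isLocalization _ M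
  haveI : Algebra.EssFiniteType V C := Algebra.EssFiniteType.comp V Bq C
  haveI : Algebra.EssFiniteType C A := Algebra.EssFiniteType.of_isLocalization _ n.primeCompl
  haveI : Algebra.EssFiniteType V A := Algebra.EssFiniteType.comp V C A
  haveI : Algebra.EssFiniteType K A := Algebra.EssFiniteType.of_comp V K A
  have bij : Function.Bijective (algebraMap K A) :=
    Algebra.FormallyUnramified.bijective_of_isAlgClosed_of_isLocalRing K A
  -- the retraction of B into K
  let e : K ≃+* A := RingEquiv.ofBijective (algebraMap K A) bij
  let Φ : B →+* A := (algebraMap C A).comp ((algebraMap Bq C).comp (algebraMap B Bq))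
  let ψ : B →+* K := e.symm.toRingHom.comp Φ
  have hψe : ∀ b : B, algebraMap K A (ψ b) = Φ b := fun b =>
    show e (e.symm (Φ b)) = Φ b from e.apply_symm_apply _
  have hψV : ∀ v : V, ψ (algebraMap V B v) = algebraMap V K v := by
    intro v
    apply bij.injective
    have h1 : Φ (algebraMap V B v) = algebraMap V A v := by
      rw [IsScalarTower.algebraMap_apply V C A, IsScalarTower.algebraMap_apply V Bq C,
        IsScalarTower.algebraMap_apply V B Bq]
      rfl
    rw [hψe, h1, ← IsScalarTower.algebraMap_apply V K A]
  have hker : ∀ b : B, ψ b = 0 → b ∈ q := by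
    intro b hb
    by_contra hbq
    have hu : IsUnit (algebraMap B Bq b) :=
      (IsLocalization.AtPrime.isUnit_to_map_iff Bq q b).mpr hbq
    have hu2 : IsUnit (Φ b) := (hu.map (algebraMap Bq C)).map (algebraMap C A)
    have hz : Φ b = 0 := by rw [← hψe b, hb, map_zero]
    rw [hz] at hu2
    exact not_isUnit_zero hu2
  have hrange : ∀ b : B, ψ b ∈ (algebraMap V K).range := by
    intro b
    by_contra hx
    have hx0 : ψ b ≠ 0 := fun h => hx (h ▸ ⟨0, map_zero _⟩)
    rcases ValuationRing.isInteger_or_isInteger V (ψ b) with h | h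
    · obtain ⟨v, hv⟩ := h
      exact hx ⟨v, hv⟩
    · obtain ⟨v, hv⟩ := h
      have hvnu : v ∈ IsLocalRing.maximalIdeal V := by
        rw [IsLocalRing.mem_maximalIdeal, mem_nonunits_iff]
        rintro ⟨u, rfl⟩
        refine hx ⟨(u⁻¹ : Vˣ), ?_⟩
        have h1 : algebraMap V K (u : V) * algebraMap V K ((u⁻¹ : Vˣ) : V) = 1 := by
          rw [← map_mul]
          simp
        have h2 : algebraMap V K ((u⁻¹ : Vˣ) : V) = (algebraMap V K (u : V))⁻¹ :=
          eq_inv_of_mul_eq_one_right h1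
        rw [h2, hv, inv_inv]
      have hvq : algebraMap V B v ∈ q := hq (Ideal.mem_map_of_mem _ hvnu)
      have hmul : ψ (b * algebraMap V B v) = 1 := by
        rw [map_mul, hψV, hv, mul_inv_cancel₀ hx0]
      have hmem : b * algebraMap V B v - 1 ∈ q := by
        apply hker
        rw [map_sub, hmul, map_one, sub_self]
      have hone : (1 : B) ∈ q := by
        have := q.sub_mem (q.mul_mem_left b hvq) hmem
        simpa using this
      exact hqmax.ne_top ((Ideal.eq_top_iff_one _).mpr hone)
  -- assemble the algebra retraction
  let ψa : B →ₐ[V] K := { toRingHom := ψ, commutes' := hψV }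
  have hinjV : Function.Injective (Algebra.ofId V K) := by
    have h := IsFractionRing.injective V K
    exact fun a b hab => h (by simpa [Algebra.ofId_apply] using hab)
  let eqv := AlgEquiv.ofInjective (Algebra.ofId V K) hinjV
  refine ⟨eqv.symm.toAlgHom.comp (ψa.codRestrict (Algebra.ofId V K).range ?_)⟩
  intro b
  obtain ⟨v, hv⟩ := hrange b
  exact ⟨v, hv⟩

set_option maxHeartbeats 2000000 in
theorem product_of_valuation_rings_has_no_nonsplit_etale_covers
    (I : Type) (V : I → Type) [∀ i, CommRing (V i)] [∀ i, IsDomain (V i)]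
    [∀ i, ValuationRing (V i)] (halg : ∀ i, IsAlgClosed (FractionRing (V i)))
    (B : Type) [CommRing B] [Algebra (∀ i, V i) B]
    [Algebra.Etale (∀ i, V i) B] [Module.FaithfullyFlat (∀ i, V i) B] :
    Nonempty (B →ₐ[∀ i, V i] (∀ i, V i)) := by
  classical
  have hsec : ∀ i : I, ∃ g : B →+* V i, ∀ r : ∀ j, V j,
      g (algebraMap (∀ j, V j) B r) = r i := by
    intro i
    haveI := halg i
    letI : Algebra (∀ j, V j) (V i) := (Pi.evalRingHom V i).toAlgebra
    haveI het : Algebra.Etale (V i) ((V i) ⊗[∀ j, V j] B) := inferInstance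
    haveI : Algebra.FormallyEtale (V i) ((V i) ⊗[∀ j, V j] B) := het.formallyEtale
    haveI : Algebra.FinitePresentation (V i) ((V i) ⊗[∀ j, V j] B) :=
      het.finitePresentation
    haveI : Algebra.FiniteType (V i) ((V i) ⊗[∀ j, V j] B) :=
      Algebra.FiniteType.of_finitePresentation
    haveI : Module.Flat (V i) ((V i) ⊗[∀ j, V j] B) := inferInstance
    have hne : Ideal.map (algebraMap (V i) ((V i) ⊗[∀ j, V j] B))
        (IsLocalRing.maximalIdeal (V i)) ≠ ⊤ := by
      intro htop
      set m := IsLocalRing.maximalIdeal (V i) with hm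
      have h1 : m • (⊤ : Submodule (V i) ((V i) ⊗[∀ j, V j] B)) = ⊤ := by
        rw [Ideal.smul_top_eq_map, htop]
        simp
      have h2 : Subsingleton (((V i) ⊗[∀ j, V j] B) ⧸
          (m • (⊤ : Submodule (V i) ((V i) ⊗[∀ j, V j] B)))) :=
        Submodule.Quotient.subsingleton_iff.mpr h1
      have h3 : Subsingleton (((V i) ⧸ m) ⊗[V i] ((V i) ⊗[∀ j, V j] B)) :=
        (quotTensorEquivQuotSMul ((V i) ⊗[∀ j, V j] B) m).toEquiv.subsingleton
      have h4 : Subsingleton (((V i) ⧸ m) ⊗[∀ j, V j] B) :=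
        (TensorProduct.AlgebraTensorModule.cancelBaseChange (∀ j, V j) (V i) (V i)
          ((V i) ⧸ m) B).symm.toEquiv.subsingleton
      haveI : Nontrivial ((V i) ⧸ m) :=
        Ideal.Quotient.nontrivial_iff.mpr (Ideal.IsMaximal.ne_top inferInstance)
      haveI : Nontrivial (((V i) ⧸ m) ⊗[∀ j, V j] B) :=
        Module.FaithfullyFlat.rTensor_nontrivial (∀ j, V j) B ((V i) ⧸ m)
      exact false_of_nontrivial_of_subsingleton (((V i) ⧸ m) ⊗[∀ j, V j] B)
    obtain ⟨φ⟩ := etale_section_of_valuation_ring (V i) ((V i) ⊗[∀ j, V j] B) hne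
    refine ⟨φ.toRingHom.comp (Algebra.TensorProduct.includeRight.toRingHom), ?_⟩
    intro r
    have h5 : (Algebra.TensorProduct.includeRight : B →ₐ[∀ j, V j] (V i) ⊗[∀ j, V j] B)
        (algebraMap (∀ j, V j) B r) = algebraMap (∀ j, V j) ((V i) ⊗[∀ j, V j] B) r :=
      AlgHom.commutes _ r
    have h6 : algebraMap (∀ j, V j) ((V i) ⊗[∀ j, V j] B) r
        = algebraMap (V i) ((V i) ⊗[∀ j, V j] B) (algebraMap (∀ j, V j) (V i) r) :=
      IsScalarTower.algebraMap_apply _ _ _ r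
    show φ ((Algebra.TensorProduct.includeRight : B →ₐ[∀ j, V j] (V i) ⊗[∀ j, V j] B)
      (algebraMap (∀ j, V j) B r)) = r i
    rw [h5, h6, φ.commutes]
    rfl
  choose g hg using hsec
  refine ⟨{ toRingHom := Pi.ringHom g, commutes' := ?_ }⟩
  intro r
  have : algebraMap (∀ i, V i) (∀ i, V i) r = r := rfl
  rw [this]
  funext i
  exact hg i r
end

section
/- Let p be a prime and let (A, ϖ) be a perfectoid ring with tilt A♭. Then there is a bijection ι from the set of idempotent elements of A to the set of idempotent elements of A♭ such that ι(0) = 0, ι(1) = 1, ι(e·f) = ι(e)·ι(f) for all idempotents e, f, and such that for every idempotent e of A, the zeroth component (Perfection.coeff 0) of ι(e) in A/pA equals the image of e in A/pA. -/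
section Aux

variable {p : ℕ} [hp : Fact p.Prime] {A : Type} [CommRing A] {ϖ : A}

lemma mem_smul_top_iff (n : ℕ) (x : A) :
    x ∈ (Ideal.span {ϖ} ^ n • ⊤ : Submodule A A) ↔ ϖ ^ n ∣ x := by
  rw [smul_eq_mul, Ideal.mul_top, Ideal.span_singleton_pow, Ideal.mem_span_singleton]

lemma eq_zero_of_forall_pow_dvd_s19 (hA : IsPerfectoid p A ϖ) (x : A)
    (h : ∀ n, ϖ ^ n ∣ x) : x = 0 :=
  hA.complete.toIsHausdorff.haus x fun n =>
    SModEq.zero.2 ((mem_smul_top_iff n x).2 (h n))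

lemma varpi_dvd_p (hA : IsPerfectoid p A ϖ) : ϖ ∣ (p : A) :=
  (dvd_pow_self ϖ hp.out.ne_zero).trans hA.pow_dvd

lemma idem_eq_of_p_dvd_sub (hA : IsPerfectoid p A ϖ) {e f : A}
    (he : e * e = e) (hf : f * f = f) (hd : (p : A) ∣ e - f) : e = f := by
  set d := e - f with hdef
  have hd3 : d * (d * d) = d := by
    simp only [hdef]
    linear_combination (e + 1 - 3 * f) * he + (3 * e - f - 1) * hf
  have h1 : ϖ ∣ d := (varpi_dvd_p hA).trans hd
  have key : ∀ n, ϖ ^ (n + 1) ∣ d := by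
    intro n
    induction n with
    | zero => simpa using h1
    | succ n ih =>
      have h3 : ϖ ^ (3 * (n + 1)) ∣ d := by
        have : ϖ ^ (3 * (n + 1)) ∣ d * (d * d) := by
          have heq : ϖ ^ (3 * (n + 1)) = ϖ ^ (n + 1) * (ϖ ^ (n + 1) * ϖ ^ (n + 1)) := by ring
          rw [heq]
          exact mul_dvd_mul ih (mul_dvd_mul ih ih)
        rwa [hd3] at this
      exact (pow_dvd_pow ϖ (by omega)).trans h3
  have hd0 : d = 0 := by
    refine eq_zero_of_forall_pow_dvd_s19 hA d (fun n => ?_)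
    cases n with
    | zero => simpa using one_dvd d
    | succ n => exact key n
  exact sub_eq_zero.1 hd0

lemma exists_idem_lift (hA : IsPerfectoid p A ϖ) (x : A) (hx : (p : A) ∣ x * x - x) :
    ∃ L : A, L * L = L ∧ (p : A) ∣ L - x := by
  have hϖp : ϖ ∣ (p : A) := varpi_dvd_p hA
  let g : ℕ → A := fun n => Nat.rec x (fun _ gn => 3 * gn ^ 2 - 2 * gn ^ 3) n
  have hg0 : g 0 = x := rfl
  have hgs : ∀ n, g (n + 1) = 3 * (g n) ^ 2 - 2 * (g n) ^ 3 := fun n => rfl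
  have inv : ∀ n, (p : A) * ϖ ^ n ∣ g n * g n - g n := by
    intro n
    induction n with
    | zero => simpa [hg0] using hx
    | succ n ih =>
      obtain ⟨a, ha⟩ := ih
      have key : g (n + 1) * g (n + 1) - g (n + 1)
          = (g n * g n - g n) ^ 2 * (4 * (g n * g n - g n) - 3) := by
        rw [hgs]; ring
      rw [key, ha]
      have h1 : (p : A) * ϖ ^ (n + 1) ∣ ((p : A) * ϖ ^ n * a) ^ 2 := by
        obtain ⟨c, hc⟩ := hϖp
        refine ⟨ϖ ^ n * c * a ^ 2, ?_⟩
        calc ((p : A) * ϖ ^ n * a) ^ 2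
            = (p : A) * ((p : A) * (ϖ ^ n * ϖ ^ n * a ^ 2)) := by ring
          _ = (p : A) * ((ϖ * c) * (ϖ ^ n * ϖ ^ n * a ^ 2)) := by rw [← hc]
          _ = (p : A) * ϖ ^ (n + 1) * (ϖ ^ n * c * a ^ 2) := by ring
      exact h1.mul_right _
  have step : ∀ n, ∃ b, g (n + 1) - g n = (p : A) * (ϖ ^ n * b) := by
    intro n
    obtain ⟨a, ha⟩ := inv n
    refine ⟨a * (-(2 * g n - 1)), ?_⟩
    have h2 : g (n + 1) - g n = (g n * g n - g n) * (-(2 * g n - 1)) := by rw [hgs]; ring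
    rw [h2, ha]; ring
  choose b hb using step
  let H : ℕ → A := fun n => ∑ k ∈ Finset.range n, ϖ ^ k * b k
  have hgH : ∀ n, g n = x + (p : A) * H n := by
    intro n
    induction n with
    | zero => simp [H, hg0]
    | succ n ih =>
      have h3 : g (n + 1) = g n + (p : A) * (ϖ ^ n * b n) := by rw [← hb n]; ring
      rw [h3, ih, show H (n + 1) = H n + ϖ ^ n * b n from Finset.sum_range_succ _ n]
      ring
  have cauchy : ∀ {m n : ℕ}, m ≤ n →
      H m ≡ H n [SMOD (Ideal.span {ϖ} ^ m • ⊤ : Submodule A A)] := by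
    intro m n hmn
    rw [SModEq.sub_mem, mem_smul_top_iff]
    have h4 : H m - H n = -∑ k ∈ Finset.Ico m n, ϖ ^ k * b k := by
      rw [Finset.sum_Ico_eq_sub _ hmn]; simp [H]
    rw [h4]
    exact (Finset.dvd_sum fun k hk =>
      (pow_dvd_pow ϖ (Finset.mem_Ico.1 hk).1).mul_right _).neg_right
  obtain ⟨Hlim, hHlim⟩ := hA.complete.toIsPrecomplete.prec cauchy
  have hdvdlim : ∀ n, ϖ ^ n ∣ Hlim - H n := by
    intro n
    have := (SModEq.sub_mem.1 (hHlim n))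
    rw [mem_smul_top_iff] at this
    have h5 : Hlim - H n = -(H n - Hlim) := by ring
    rw [h5]; exact this.neg_right
  refine ⟨x + (p : A) * Hlim, ?_, ⟨Hlim, by ring⟩⟩
  have hL : ∀ n, ϖ ^ n ∣ (x + (p : A) * Hlim) - g n := by
    intro n
    have h6 : (x + (p : A) * Hlim) - g n = (p : A) * (Hlim - H n) := by
      rw [hgH n]; ring
    rw [h6]
    exact (hdvdlim n).mul_left _
  have hidem : (x + (p : A) * Hlim) * (x + (p : A) * Hlim) - (x + (p : A) * Hlim) = 0 := by
    refine eq_zero_of_forall_pow_dvd_s19 hA _ (fun n => ?_)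
    have e1 : (x + (p : A) * Hlim) * (x + (p : A) * Hlim) - (x + (p : A) * Hlim)
        = (g n * g n - g n) + ((x + (p : A) * Hlim) - g n) * ((x + (p : A) * Hlim) + g n - 1) := by
      ring
    rw [e1]
    exact dvd_add ((dvd_mul_left _ _).trans (inv n)) ((hL n).mul_right _)
  exact sub_eq_zero.1 hidem

end Aux

/-- The set of idempotent elements of a commutative ring. -/
def Idem (R : Type) [CommRing R] : Type := { e : R // e * e = e }

theorem idempotents_of_perfectoid_and_tilt
    (p : ℕ) [Fact p.Prime] (A : Type) [CommRing A] (ϖ : A)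
    [CharP (A ⧸ Ideal.span {(p : A)}) p]
    (hA : IsPerfectoid p A ϖ) :
    ∃ ι : Idem A ≃ Idem (Perfection (A ⧸ Ideal.span {(p : A)}) p),
      (ι ⟨0, by ring⟩).1 = 0 ∧
      (ι ⟨1, by ring⟩).1 = 1 ∧
      (∀ e f : Idem A,
        (ι ⟨e.1 * f.1, by rw [mul_mul_mul_comm, e.2, f.2]⟩).1 = (ι e).1 * (ι f).1) ∧
      ∀ e : Idem A,
        Perfection.coeff (A ⧸ Ideal.span {(p : A)}) p 0 (ι e).1 =
          Ideal.Quotient.mk (Ideal.span {(p : A)}) e.1 := by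
  set R := A ⧸ Ideal.span {(p : A)} with hR
  let mk : A →+* R := Ideal.Quotient.mk (Ideal.span {(p : A)})
  have hp1 : p - 1 + 1 = p := Nat.succ_pred_eq_of_pos (Fact.out : p.Prime).pos
  have idem_pow : ∀ a : R, a * a = a → a ^ p = a := by
    intro a ha
    have key : ∀ m, a ^ (m + 1) = a := by
      intro m
      induction m with
      | zero => simp
      | succ m ih => rw [pow_succ, ih, ha]
    have h := key (p - 1)
    rwa [hp1] at h
  let T : Idem A → Idem (Perfection R p) := fun e =>
    ⟨⟨fun _ => mk e.1, fun _ => idem_pow _ (by rw [← map_mul, e.2])⟩, by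
      apply Perfection.ext; intro n
      refine (map_mul (Perfection.coeff R p n) _ _).trans ?_
      show mk e.1 * mk e.1 = mk e.1
      rw [← map_mul, e.2]⟩
  have hinj : Function.Injective T := by
    intro e f h
    have h0 : mk e.1 = mk f.1 := congrArg (fun y => Perfection.coeff R p 0 y.1) h
    have hd : (p : A) ∣ e.1 - f.1 := by
      rwa [← Ideal.mem_span_singleton, ← Ideal.Quotient.eq]
    exact Subtype.ext (idem_eq_of_p_dvd_sub hA e.2 f.2 hd)
  have hcoeff : ∀ (y : Idem (Perfection R p)) (n : ℕ),
      Perfection.coeff R p n y.1 = Perfection.coeff R p 0 y.1 := by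
    intro y n
    induction n with
    | zero => rfl
    | succ n ih =>
      have h1 : Perfection.coeff R p (n + 1) y.1 ^ p = Perfection.coeff R p n y.1 :=
        Perfection.coeff_pow_p' y.1 n
      have h2 : Perfection.coeff R p (n + 1) y.1 * Perfection.coeff R p (n + 1) y.1
          = Perfection.coeff R p (n + 1) y.1 := by rw [← map_mul, y.2]
      rw [← ih, ← h1, idem_pow _ h2]
  have hsurj : Function.Surjective T := by
    intro y
    obtain ⟨a, ha⟩ := Ideal.Quotient.mk_surjective (Perfection.coeff R p 0 y.1)
    have h2 : Perfection.coeff R p 0 y.1 * Perfection.coeff R p 0 y.1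
        = Perfection.coeff R p 0 y.1 := by rw [← map_mul, y.2]
    have hy2 : mk (a * a - a) = 0 := by
      rw [map_sub, map_mul, ha, h2, sub_self]
    have hdvd : (p : A) ∣ a * a - a := by
      rwa [← Ideal.mem_span_singleton, ← Ideal.Quotient.eq_zero_iff_mem]
    obtain ⟨L, hLidem, hLa⟩ := exists_idem_lift hA a hdvd
    refine ⟨⟨L, hLidem⟩, ?_⟩
    apply Subtype.ext; apply Perfection.ext; intro n
    have hmkL : mk L = mk a := Ideal.Quotient.eq.2 (Ideal.mem_span_singleton.2 hLa)
    show mk L = Perfection.coeff R p n y.1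
    rw [hcoeff y n, ← ha, hmkL]
  refine ⟨Equiv.ofBijective T ⟨hinj, hsurj⟩, ?_, ?_, ?_, ?_⟩
  · apply Perfection.ext; intro n
    show mk 0 = Perfection.coeff R p n 0
    simp
  · apply Perfection.ext; intro n
    show mk 1 = Perfection.coeff R p n 1
    simp
  · intro e f
    apply Perfection.ext; intro n
    rw [map_mul]
    show mk (e.1 * f.1) = mk e.1 * mk f.1
    rw [map_mul]
  · intro e
    rfl
end
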